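/- arXiv:1605.08266 — 4 statements merged into one kernel-verified Lean document; each statement's English description precedes it below -/
import Mathlib

section
/- Let G be a transitive permutation group on a finite set Ω with |Ω| = n ≥ 3, and let G_x be the stabilizer of a point x ∈ Ω. Then the number of primes p such that the cyclic group of order p is a composition factor of G but is NOT a composition factor of G_x is strictly less than log₂ n. -/
open Equiv

/-- `c` is a composition series of the group `G`, running from the trivial subgroup to `G`,
in which each term is normal in the next and there is no intermediate normal subgroup
(equivalently, each successive quotient is simple). -/
def IsCompositionChain {G : Type*} [Group G] {n : ℕ} (c : Fin (n + 1) → Subgroup G) : Prop :=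
  c 0 = ⊥ ∧ c (Fin.last n) = ⊤ ∧
    ∀ i : Fin n,
      c i.castSucc < c i.succ ∧
        ((c i.castSucc).subgroupOf (c i.succ)).Normal ∧
          ∀ K : Subgroup G, c i.castSucc < K → K ≤ c i.succ →
            (K.subgroupOf (c i.succ)).Normal → K = c i.succ

/-- The group `S` occurs as a composition factor of the group `G`: some composition series
of `G` has a step `c i ⊴ c (i+1)` whose quotient is isomorphic to `S` (expressed via a
surjective homomorphism from `c (i+1)` onto `S` with kernel `c i`). -/
def IsCompFactor (S : Type*) [Group S] (G : Type*) [Group G] : Prop :=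
  ∃ (n : ℕ) (c : Fin (n + 1) → Subgroup G), IsCompositionChain c ∧
    ∃ (i : Fin n) (f : ↥(c i.succ) →* S),
      Function.Surjective f ∧ f.ker = (c i.castSucc).subgroupOf (c i.succ)

/-- The cyclic group of (prime) order `p` occurs as a composition factor of `G`. -/
def HasCyclicCompFactor (G : Type*) [Group G] (p : ℕ) : Prop :=
  IsCompFactor (Multiplicative (ZMod p)) G

/-- The number of distinct primes `p` such that the cyclic group of order `p` occurs as a
composition factor of `G`; this is the number of isomorphism types of abelian composition
factors of `G`, i.e. `|Comp_A(G)|`. -/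
noncomputable def abelianCompFactorCount (G : Type*) [Group G] : ℕ :=
  {p : ℕ | p.Prime ∧ HasCyclicCompFactor G p}.ncard

/-- A permutation group `G ≤ Sym(Ω)` is transitive. -/
def IsTransitivePermGroup {Ω : Type*} (G : Subgroup (Equiv.Perm Ω)) : Prop :=
  ∀ a b : Ω, ∃ g ∈ G, g a = b

/-- `B` is a block for the permutation group `G ≤ Sym(Ω)`: every `g ∈ G` maps `B`
either onto itself or onto a set disjoint from `B`. -/
def IsBlockOf {Ω : Type*} (G : Subgroup (Equiv.Perm Ω)) (B : Set Ω) : Prop :=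
  ∀ g ∈ G, (g : Equiv.Perm Ω) '' B = B ∨ Disjoint ((g : Equiv.Perm Ω) '' B) B

/-- A permutation group `G ≤ Sym(Ω)` is primitive: it is transitive and all of its blocks
are trivial (subsingletons or all of `Ω`). -/
def IsPrimitivePermGroup {Ω : Type*} (G : Subgroup (Equiv.Perm Ω)) : Prop :=
  IsTransitivePermGroup G ∧ ∀ B : Set Ω, IsBlockOf G B → B.Subsingleton ∨ B = Set.univ

/-- The restriction homomorphism `H → Sym(Δ)` for a subgroup `H ≤ Sym(Ω)` leaving the
subset `Δ ⊆ Ω` invariant; its image is the permutation group `H^Δ` induced by `H` on `Δ`. -/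
def inducedPermHom {Ω : Type*} (H : Subgroup (Equiv.Perm Ω)) (Δ : Set Ω)
    (hinv : ∀ g ∈ H, ∀ a ∈ Δ, g a ∈ Δ) : ↥H →* Equiv.Perm ↥Δ where
  toFun g := Equiv.Perm.subtypePerm (g : Equiv.Perm Ω)
    (fun a => ⟨fun ha => by
      have h' := hinv _ (H.inv_mem g.2) _ ha
      simpa using h', fun ha => hinv g g.2 a ha⟩)
  map_one' := rfl
  map_mul' g₁ g₂ := rfl


section PyberProofAux

open Subgroup


/-- Auxiliary notion of subnormal subgroup. -/
inductive PyberSubnormal {G : Type*} [Group G] : Subgroup G → Prop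
  | top : PyberSubnormal ⊤
  | step {A B : Subgroup G} (hAB : A ≤ B) (hN : (A.subgroupOf B).Normal)
      (hB : PyberSubnormal B) : PyberSubnormal A

/-- `G` has a subnormal section of prime index `p`. -/
def PyberHasPF (G : Type*) [Group G] (p : ℕ) : Prop :=
  ∃ A B : Subgroup G, A ≤ B ∧ (A.subgroupOf B).Normal ∧ A.relIndex B = p ∧ PyberSubnormal B

lemma pyber_subgroupOf_mono {G : Type*} [Group G] {A B M : Subgroup G} (h : A ≤ B) :
    A.subgroupOf M ≤ B.subgroupOf M := by
  intro x hx
  rw [mem_subgroupOf] at hx ⊢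
  exact h hx

lemma pyber_subgroupOf_normal_of_le {G : Type*} [Group G] {A B M : Subgroup G}
    (hAB : A ≤ B) (hBM : B ≤ M) (hN : (A.subgroupOf B).Normal) :
    ((A.subgroupOf M).subgroupOf (B.subgroupOf M)).Normal := by
  rw [normal_subgroupOf_iff hAB] at hN
  rw [normal_subgroupOf_iff (pyber_subgroupOf_mono hAB)]
  intro h k hh hk
  rw [mem_subgroupOf] at hh hk ⊢
  simp only [Subgroup.coe_mul, Subgroup.coe_inv]
  exact hN _ _ hh hk

lemma pyber_subgroupOf_normal_of_le' {G : Type*} [Group G] {N M K : Subgroup G}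
    (hNM : N ≤ M) (hMK : M ≤ K) (hN : (N.subgroupOf K).Normal) :
    (N.subgroupOf M).Normal := by
  rw [normal_subgroupOf_iff (hNM.trans hMK)] at hN
  rw [normal_subgroupOf_iff hNM]
  exact fun h k hh hk => hN h k hh (hMK hk)

lemma pyber_map_subgroupOf_normal {G H : Type*} [Group G] [Group H] (φ : G →* H)
    (hφ : Function.Injective φ) {A B : Subgroup G} (hAB : A ≤ B)
    (hN : (A.subgroupOf B).Normal) : ((A.map φ).subgroupOf (B.map φ)).Normal := by
  rw [normal_subgroupOf_iff hAB] at hN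
  rw [normal_subgroupOf_iff (map_mono hAB)]
  rintro h k hh hk
  rcases mem_map.mp hh with ⟨a, ha, rfl⟩
  rcases mem_map.mp hk with ⟨b, hb, rfl⟩
  exact mem_map.mpr ⟨b * a * b⁻¹, hN a b ha hb, by simp⟩

lemma PyberSubnormal.map_of {G H : Type*} [Group G] [Group H] {φ : G →* H}
    (hφ : Function.Injective φ) (hr : PyberSubnormal φ.range) {B : Subgroup G}
    (h : PyberSubnormal B) : PyberSubnormal (B.map φ) := by
  induction h with
  | top => rw [← MonoidHom.range_eq_map]; exact hr
  | @step A B hAB hN hB ih =>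
      exact .step (map_mono hAB) (pyber_map_subgroupOf_normal φ hφ hAB hN) ih

lemma PyberHasPF.map {G H : Type*} [Group G] [Group H] (φ : G →* H)
    (hφ : Function.Injective φ) (hr : PyberSubnormal φ.range) {p : ℕ} :
    PyberHasPF G p → PyberHasPF H p := by
  rintro ⟨A, B, hAB, hN, hrel, hsub⟩
  refine ⟨A.map φ, B.map φ, map_mono hAB, pyber_map_subgroupOf_normal φ hφ hAB hN, ?_,
    PyberSubnormal.map_of hφ hr hsub⟩
  rw [← hrel]
  have h := Subgroup.relIndex_comap (H := A.map φ) φ B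
  rw [comap_map_eq_self_of_injective hφ] at h
  exact h.symm

lemma PyberHasPF.of_mulEquiv {G H : Type*} [Group G] [Group H] (e : G ≃* H) {p : ℕ} :
    PyberHasPF G p → PyberHasPF H p :=
  PyberHasPF.map e.toMonoidHom e.injective
    (by rw [MonoidHom.range_eq_top_of_surjective _ e.surjective]; exact .top)

lemma PyberHasPF.lift {G : Type*} [Group G] {K : Subgroup G} (hK : K.Normal) {p : ℕ} :
    PyberHasPF ↥K p → PyberHasPF G p := by
  haveI := hK
  refine PyberHasPF.map K.subtype K.subtype_injective ?_
  rw [K.range_subtype]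
  exact .step le_top inferInstance .top

lemma PyberSubnormal.cases' {G : Type*} [Group G] {B : Subgroup G} (h : PyberSubnormal B) :
    B = ⊤ ∨ ∃ M : Subgroup G, M.Normal ∧ M ≠ ⊤ ∧ B ≤ M ∧ PyberSubnormal (B.subgroupOf M) := by
  induction h with
  | top => exact Or.inl rfl
  | @step A B hAB hN hB ih =>
      rcases ih with rfl | ⟨M, hMn, hMt, hBM, hsub⟩
      · by_cases hA : A = ⊤
        · exact Or.inl hA
        · refine Or.inr ⟨A, ?_, hA, le_rfl, by rw [subgroupOf_self]; exact .top⟩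
          have h' := (normal_subgroupOf_iff le_top).mp hN
          exact ⟨fun a ha g => h' a g ha trivial⟩
      · exact Or.inr ⟨M, hMn, hMt, hAB.trans hBM,
          .step (pyber_subgroupOf_mono hAB) (pyber_subgroupOf_normal_of_le hAB hBM hN) hsub⟩

lemma pyber_relindex_normal_dvd_index {G : Type*} [Group G] [Finite G] (H M : Subgroup G)
    (hM : M.Normal) : H.relIndex M ∣ H.index := by
  haveI := hM
  have h1 : (H ⊓ M).relIndex M * M.relIndex (H ⊔ M) = (H ⊓ M).relIndex (H ⊔ M) :=
    relIndex_mul_relIndex _ _ _ inf_le_right le_sup_right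
  have h2 : (H ⊓ M).relIndex (H ⊔ M) * (H ⊔ M).index = (H ⊓ M).index :=
    relIndex_mul_index (le_trans inf_le_left le_sup_left)
  have h3 : (H ⊓ M).relIndex H * H.index = (H ⊓ M).index := relIndex_mul_index inf_le_left
  have h4 : (H ⊓ M).relIndex H = M.relIndex H := inf_relIndex_left H M
  have h5 : M.relIndex (H ⊔ M) = M.relIndex H := relIndex_sup_right H M
  have h6 : H.relIndex M = (H ⊓ M).relIndex M := (inf_relIndex_right H M).symm
  have key : M.relIndex H * (H.relIndex M * (H ⊔ M).index) = M.relIndex H * H.index := by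
    calc M.relIndex H * (H.relIndex M * (H ⊔ M).index)
        = (H ⊓ M).relIndex M * M.relIndex (H ⊔ M) * (H ⊔ M).index := by rw [h6, h5]; ring
      _ = (H ⊓ M).index := by rw [h1, h2]
      _ = M.relIndex H * H.index := by rw [← h3, h4]
  have hc : 0 < M.relIndex H := by
    have : (M.subgroupOf H).index ≠ 0 := Subgroup.index_ne_zero_of_finite
    exact Nat.pos_of_ne_zero this
  exact Dvd.intro _ ((Nat.eq_of_mul_eq_mul_left hc key))


def PyberCStep {G : Type*} [Group G] (X Y : Subgroup G) : Prop :=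
  X < Y ∧ (X.subgroupOf Y).Normal ∧
    ∀ K : Subgroup G, X < K → K ≤ Y → (K.subgroupOf Y).Normal → K = Y

inductive PyberChain {G : Type*} [Group G] : Subgroup G → Subgroup G → List (Subgroup G) → Prop
  | single (A : Subgroup G) : PyberChain A A [A]
  | cons {A B C : Subgroup G} {l : List (Subgroup G)} (h : PyberCStep A B)
      (hl : PyberChain B C l) : PyberChain A C (A :: l)

namespace PyberChain

variable {G : Type*} [Group G]

lemma ne_nil {A B : Subgroup G} {l : List (Subgroup G)} (h : PyberChain A B l) : l ≠ [] := by
  cases h <;> simp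

lemma head_eq {A B : Subgroup G} {l : List (Subgroup G)} (h : PyberChain A B l) :
    ∃ t, l = A :: t := by
  cases h with
  | single => exact ⟨[], rfl⟩
  | cons h hl => exact ⟨_, rfl⟩

lemma trans {A B C : Subgroup G} {l₁ l₂ : List (Subgroup G)} (h1 : PyberChain A B l₁)
    (h2 : PyberChain B C l₂) : PyberChain A C (l₁.dropLast ++ l₂) := by
  induction h1 with
  | single A => simpa using h2
  | @cons A B' C' l h hl ih =>
      obtain ⟨t, rfl⟩ := hl.head_eq
      exact PyberChain.cons h (ih h2)

lemma getElem_zero {A B : Subgroup G} {l : List (Subgroup G)} (h : PyberChain A B l)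
    (hl : 0 < l.length) : l[0] = A := by
  obtain ⟨t, rfl⟩ := h.head_eq
  simp

lemma getLast_eq {A B : Subgroup G} {l : List (Subgroup G)} (h : PyberChain A B l) :
    l.getLast h.ne_nil = B := by
  induction h with
  | single A => rfl
  | @cons A B' C' l h hl ih =>
      rw [List.getLast_cons hl.ne_nil]
      exact ih

lemma step {A B : Subgroup G} {l : List (Subgroup G)} (h : PyberChain A B l) :
    ∀ (i : ℕ) (hi : i + 1 < l.length), PyberCStep (l[i]'(by omega)) (l[i + 1]'hi) := by
  induction h with
  | single A => intro i hi; simp at hi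
  | @cons A B' C' l h hl ih =>
      intro i hi
      match i with
      | 0 =>
          have hl0 : 0 < l.length := by simpa using hi
          have h0 : l[0]'hl0 = B' := hl.getElem_zero hl0
          simpa [h0] using h
      | (j + 1) =>
          have hj : j + 1 < l.length := by simpa using hi
          simpa using ih j hj

end PyberChain

lemma pyber_card_lt_card {G : Type*} [Group G] [Finite G] {A B : Subgroup G} (h : A < B) :
    Nat.card ↥A < Nat.card ↥B := by
  rw [← SetLike.coe_ssubset_coe] at h
  rw [show Nat.card ↥A = Nat.card ↥(A : Set G) from rfl,
    show Nat.card ↥B = Nat.card ↥(B : Set G) from rfl,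
    Nat.card_coe_set_eq, Nat.card_coe_set_eq]
  exact Set.ncard_strictMono h

lemma pyber_exists_chain {G : Type*} [Group G] [Finite G] :
    ∀ (n : ℕ) (N K : Subgroup G), Nat.card ↥K ≤ n → N ≤ K → (N.subgroupOf K).Normal →
      ∃ l, PyberChain N K l := by
  intro n
  induction n with
  | zero =>
      intro N K hcard
      have := Nat.card_pos (α := ↥K)
      omega
  | succ n ih =>
      intro N K hcard hNK hN
      by_cases heq : N = K
      · exact ⟨[K], heq ▸ PyberChain.single K⟩
      · haveI : Finite (Subgroup G) :=
          Finite.of_injective (fun H : Subgroup G => (H : Set G)) SetLike.coe_injective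
        set S : Set (Subgroup G) := {M | N ≤ M ∧ M < K ∧ (M.subgroupOf K).Normal} with hS
        have hNS : N ∈ S := ⟨le_rfl, lt_of_le_of_ne hNK heq, hN⟩
        obtain ⟨M, hMS, hmax⟩ := Set.exists_max_image S
          (fun M : Subgroup G => Nat.card ↥M) (Set.toFinite S) ⟨N, hNS⟩
        have hstep : PyberCStep M K := by
          refine ⟨hMS.2.1, hMS.2.2, fun K' hMK' hK'K hK'N => ?_⟩
          by_contra hne
          have hK'S : K' ∈ S := ⟨hMS.1.trans hMK'.le, lt_of_le_of_ne hK'K hne, hK'N⟩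
          have hlt : Nat.card ↥M < Nat.card ↥K' := pyber_card_lt_card hMK'
          exact absurd (hmax K' hK'S) (not_le.mpr hlt)
        obtain ⟨l, hl⟩ := ih N M (by
            have := pyber_card_lt_card hMS.2.1
            omega) hMS.1 (pyber_subgroupOf_normal_of_le' hMS.1 hMS.2.1.le hN)
        exact ⟨_, hl.trans (PyberChain.cons hstep (PyberChain.single K))⟩

lemma PyberSubnormal.exists_chain {G : Type*} [Group G] [Finite G] {B : Subgroup G}
    (h : PyberSubnormal B) : ∃ l, PyberChain B ⊤ l := by
  induction h with
  | top => exact ⟨[⊤], PyberChain.single ⊤⟩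
  | @step A B hAB hN hB ih =>
      obtain ⟨l₂, h2⟩ := ih
      obtain ⟨l₁, h1⟩ := pyber_exists_chain (Nat.card ↥B) A B le_rfl hAB hN
      exact ⟨_, h1.trans h2⟩

lemma pyber_subnormal_of_chain {G : Type*} [Group G] {n : ℕ} {c : Fin (n + 1) → Subgroup G}
    (hlast : c (Fin.last n) = ⊤)
    (hstep : ∀ i : Fin n, c i.castSucc ≤ c i.succ ∧ ((c i.castSucc).subgroupOf (c i.succ)).Normal)
    (j : Fin (n + 1)) : PyberSubnormal (c j) := by
  induction j using Fin.reverseInduction with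
  | last => rw [hlast]; exact .top
  | cast i ih => exact .step (hstep i).1 (hstep i).2 ih

lemma pyber_hasPF_of_HCF {G : Type*} [Group G] {p : ℕ}
    (h : HasCyclicCompFactor G p) : PyberHasPF G p := by
  obtain ⟨n, c, ⟨h0, hlast, hstep⟩, i, f, hsurj, hker⟩ := h
  refine ⟨c i.castSucc, c i.succ, (hstep i).1.le, (hstep i).2.1, ?_,
    pyber_subnormal_of_chain hlast (fun j => ⟨(hstep j).1.le, (hstep j).2.1⟩) _⟩
  show ((c i.castSucc).subgroupOf (c i.succ)).index = p
  rw [← hker, Subgroup.index_eq_card]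
  have e := QuotientGroup.quotientKerEquivOfSurjective f hsurj
  rw [Nat.card_congr e.toEquiv, Nat.card_congr Multiplicative.toAdd, Nat.card_zmod]

lemma pyber_HCF_of_hasPF {G : Type*} [Group G] [Finite G] {p : ℕ} (hp : p.Prime)
    (h : PyberHasPF G p) : HasCyclicCompFactor G p := by
  obtain ⟨A, B, hAB, hN, hrel, hsub⟩ := h
  haveI := hN
  haveI := Fact.mk hp
  have hALB : A < B := lt_of_le_of_ne hAB (fun he => by
    rw [he, relIndex_self] at hrel
    exact absurd hrel.symm hp.one_lt.ne')
  have hstepAB : PyberCStep A B := by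
    refine ⟨hALB, hN, fun K hAK hKB _ => ?_⟩
    have hm : A.relIndex K * K.relIndex B = p := by
      rw [relIndex_mul_relIndex _ _ _ hAK.le hKB]; exact hrel
    rcases hp.eq_one_or_self_of_dvd _ (Dvd.intro_left _ hm) with h1 | h1
    · exact le_antisymm hKB (relIndex_eq_one.mp h1)
    · rw [h1] at hm
      have hone : A.relIndex K = 1 := by
        have hp0 : p ≠ 0 := hp.ne_zero
        have := Nat.eq_of_mul_eq_mul_right (Nat.pos_of_ne_zero hp0) (hm.trans (one_mul p).symm)
        exact this
      exact absurd (relIndex_eq_one.mp hone) hAK.not_ge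
  obtain ⟨l₂, h2⟩ := hsub.exists_chain
  obtain ⟨l₁, h1⟩ := pyber_exists_chain (Nat.card ↥A) ⊥ A le_rfl bot_le
    (by rw [bot_subgroupOf]; infer_instance)
  have hfull : PyberChain ⊥ ⊤ (l₁.dropLast ++ (A :: l₂)) := h1.trans (PyberChain.cons hstepAB h2)
  set L : List (Subgroup G) := l₁.dropLast ++ (A :: l₂) with hL
  have hlpos : 0 < L.length := List.length_pos_iff.mpr hfull.ne_nil
  set m := L.length - 1 with hm
  have hmlen : L.length = m + 1 := by omega
  have hget : ∀ j : Fin (m + 1), (j : ℕ) < L.length := fun j => by omega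
  set k := l₁.dropLast.length with hk
  have hl2pos : 0 < l₂.length := List.length_pos_iff.mpr h2.ne_nil
  have hLlen : L.length = k + 1 + l₂.length := by simp [hL, hk]; omega
  have hkm : k < m := by omega
  have hA : ∀ hh : k < L.length, L[k]'hh = A := by
    intro hh
    show (l₁.dropLast ++ (A :: l₂))[k]'hh = A
    rw [List.getElem_append_right (le_refl k)]
    simp [hk]
  have hB : ∀ hh : k + 1 < L.length, L[k + 1]'hh = B := by
    intro hh
    show (l₁.dropLast ++ (A :: l₂))[k + 1]'(hh) = B
    rw [List.getElem_append_right (by omega : l₁.dropLast.length ≤ k + 1)]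
    have hidx : k + 1 - l₁.dropLast.length = 1 := by omega
    simp only [hidx]
    have h0 : l₂[0]'hl2pos = B := h2.getElem_zero hl2pos
    simpa using h0
  have htop : ∀ hh : m < L.length, L[m]'hh = ⊤ := by
    intro hh
    have hgl := hfull.getLast_eq
    rw [List.getLast_eq_getElem] at hgl
    have hlm : L.length - 1 = m := by omega
    simp only [hlm] at hgl
    exact hgl
  have exists_hom_congr : ∀ {A' B' : Subgroup G}, A' = A → B' = B →
      (∃ f : ↥B →* Multiplicative (ZMod p), Function.Surjective f ∧
        f.ker = A.subgroupOf B) →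
      ∃ f : ↥B' →* Multiplicative (ZMod p), Function.Surjective f ∧
        f.ker = A'.subgroupOf B' := by
    rintro A' B' rfl rfl h
    exact h
  refine ⟨m, fun j => L[(j : ℕ)]'(hget j), ⟨?_, ?_, ?_⟩, ⟨k, hkm⟩, ?_⟩
  · show L[((0 : Fin (m + 1)) : ℕ)]'(hget 0) = ⊥
    simp only [Fin.val_zero]
    exact hfull.getElem_zero hlpos
  · show L[((Fin.last m) : ℕ)]'(hget _) = ⊤
    simp only [Fin.val_last]
    exact htop _
  · intro i
    have hi : (i : ℕ) + 1 < L.length := by omega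
    exact hfull.step i hi
  · refine exists_hom_congr (hA _) (hB _) ?_
    have hcard : Nat.card (↥B ⧸ A.subgroupOf B) = p := by
      rw [← Subgroup.index_eq_card]; exact hrel
    have hcard2 : Nat.card (Multiplicative (ZMod p)) = p := by
      rw [Nat.card_congr Multiplicative.toAdd, Nat.card_zmod]
    let e : (↥B ⧸ A.subgroupOf B) ≃* Multiplicative (ZMod p) :=
      mulEquivOfPrimeCardEq hcard hcard2
    refine ⟨e.toMonoidHom.comp (QuotientGroup.mk' (A.subgroupOf B)), ?_, ?_⟩
    · exact e.surjective.comp (QuotientGroup.mk'_surjective _)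
    · ext g
      simp only [MonoidHom.mem_ker, MonoidHom.comp_apply, MulEquiv.coe_toMonoidHom]
      rw [MulEquiv.map_eq_one_iff]
      rw [show ((QuotientGroup.mk' (A.subgroupOf B)) g = 1) ↔ g ∈ A.subgroupOf B from
        QuotientGroup.eq_one_iff g]

lemma pyber_key : ∀ (n : ℕ) (G : Type) [instG : Group G] [instF : Finite G], Nat.card G ≤ n →
    ∀ (H : Subgroup G) (p : ℕ), p.Prime → ¬ p ∣ H.index → PyberHasPF G p →
      PyberHasPF ↥H p := by
  intro n
  induction n with
  | zero =>
      intro G _ _ hcard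
      have := Nat.card_pos (α := G)
      omega
  | succ n ih =>
      intro G _ _ hcard H p hp hdvd hPF
      obtain ⟨A, B, hAB, hN, hrel, hsub⟩ := hPF
      rcases hsub.cases' with rfl | ⟨M, hMn, hMt, hBM, hMsub⟩
      · -- B = ⊤
        haveI hAnormal : A.Normal := by
          have h' := (normal_subgroupOf_iff le_top).mp hN
          exact ⟨fun a ha g => h' a g ha trivial⟩
        have hAidx : A.index = p := by rw [← relIndex_top_right]; exact hrel
        have h1 : (A ⊔ H).index ∣ p := hAidx ▸ index_dvd_of_le le_sup_left
        have h2 : (A ⊔ H).index ∣ H.index := index_dvd_of_le le_sup_right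
        have h3 : A ⊔ H = ⊤ := by
          rcases hp.eq_one_or_self_of_dvd _ h1 with h | h
          · exact index_eq_one.mp h
          · exact absurd (h ▸ h2) hdvd
        have hfin : A.relIndex H = p := by
          have hsup : A.relIndex (H ⊔ A) = A.relIndex H := relIndex_sup_right H A
          rw [sup_comm] at h3
          rw [h3, relIndex_top_right, hAidx] at hsup
          exact hsup.symm
        refine ⟨A.subgroupOf H, ⊤, le_top, inferInstance, ?_, .top⟩
        rw [relIndex_top_right]
        exact hfin
      · -- proper normal M
        haveI := hMn
        have hPFM : PyberHasPF ↥M p :=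
          ⟨A.subgroupOf M, B.subgroupOf M, pyber_subgroupOf_mono hAB,
            pyber_subgroupOf_normal_of_le hAB hBM hN,
            by rw [relIndex_subgroupOf hBM]; exact hrel, hMsub⟩
        have hcardM : Nat.card ↥M < Nat.card G := by
          have h1 : Nat.card ↥M < Nat.card ↥(⊤ : Subgroup G) :=
            pyber_card_lt_card (lt_top_iff_ne_top.mpr hMt)
          rwa [Subgroup.card_top] at h1
        have hHM : ¬ p ∣ ((H ⊓ M).subgroupOf M).index := by
          intro hcon
          apply hdvd
          have heq : ((H ⊓ M).subgroupOf M).index = H.relIndex M := by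
            rw [show ((H ⊓ M).subgroupOf M).index = (H ⊓ M).relIndex M from rfl,
              inf_relIndex_right]
          rw [heq] at hcon
          exact dvd_trans hcon (pyber_relindex_normal_dvd_index H M hMn)
        have hres := ih ↥M (by omega) ((H ⊓ M).subgroupOf M) p hp hHM hPFM
        have hres2 : PyberHasPF ↥(H ⊓ M) p :=
          hres.of_mulEquiv (subgroupOfEquivOfLe inf_le_right)
        have hres3 : PyberHasPF ↥((H ⊓ M).subgroupOf H) p :=
          hres2.of_mulEquiv (subgroupOfEquivOfLe inf_le_left).symm
        have hnorm : ((H ⊓ M).subgroupOf H).Normal := by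
          rw [normal_subgroupOf_iff inf_le_left]
          intro a b ha hb
          exact ⟨H.mul_mem (H.mul_mem hb ha.1) (H.inv_mem hb), hMn.conj_mem a ha.2 b⟩
        exact hres3.lift hnorm

lemma pyber_arith {n : ℕ} (hn : 3 ≤ n) (T : Finset ℕ) (hT : ∀ q ∈ T, q.Prime ∧ q ∣ n) :
    2 ^ T.card < n := by
  by_cases hk : T.card ≤ 1
  · have h2 : 2 ^ T.card ≤ 2 ^ 1 := Nat.pow_le_pow_right (by norm_num) hk
    omega
  · push_neg at hk
    have hdvd : (∏ q ∈ T, q) ∣ n :=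
      Finset.prod_primes_dvd n (fun q hq => (hT q hq).1.prime) (fun q hq => (hT q hq).2)
    have hle : (∏ q ∈ T, q) ≤ n := Nat.le_of_dvd (by omega) hdvd
    have h2k : 2 ^ T.card < ∏ q ∈ T, q := by
      by_cases h2T : 2 ∈ T
      · have hprod : (∏ q ∈ T, q) = 2 * ∏ q ∈ T.erase 2, q :=
          (Finset.mul_prod_erase T _ h2T).symm
        have hcard : (T.erase 2).card = T.card - 1 := by
          rw [Finset.card_erase_of_mem h2T]
        have h3 : ∀ q ∈ T.erase 2, 3 ≤ q := by
          intro q hq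
          obtain ⟨hne, hqT⟩ := Finset.mem_erase.mp hq
          have := (hT q hqT).1.two_le
          omega
        have hppow : 3 ^ (T.erase 2).card ≤ ∏ q ∈ T.erase 2, q :=
          Finset.pow_card_le_prod _ _ _ h3
        rw [hcard] at hppow
        have hlt : 2 ^ (T.card - 1) < 3 ^ (T.card - 1) :=
          Nat.pow_lt_pow_left (by norm_num) (by omega)
        calc 2 ^ T.card = 2 * 2 ^ (T.card - 1) := by
              rw [← pow_succ']
              congr 1
              omega
          _ < 2 * 3 ^ (T.card - 1) := mul_lt_mul_of_pos_left hlt (by norm_num)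
          _ ≤ 2 * ∏ q ∈ T.erase 2, q := Nat.mul_le_mul_left _ hppow
          _ = ∏ q ∈ T, q := hprod.symm
      · have h3 : ∀ q ∈ T, 3 ≤ q := by
          intro q hq
          have h2 := (hT q hq).1.two_le
          have hne : q ≠ 2 := fun h => h2T (h ▸ hq)
          omega
        have hppow : 3 ^ T.card ≤ ∏ q ∈ T, q := Finset.pow_card_le_prod _ _ _ h3
        have hlt : 2 ^ T.card < 3 ^ T.card := Nat.pow_lt_pow_left (by norm_num) (by omega)
        omega
    omega


end PyberProofAux

/-- Proposition 3 of Pyber. Let `G` be a transitive permutation group on a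
finite set `Ω` with `|Ω| = n ≥ 3` and let `G_x` be a point stabiliser. Then the number of
primes `p` such that the cyclic group of order `p` is a composition factor of `G` but not of
`G_x` is strictly less than `log₂ n`. -/
theorem compFactor_diff_lt_log {Ω : Type} [Fintype Ω] (G : Subgroup (Equiv.Perm Ω))
    (hn : 3 ≤ Fintype.card Ω) (htrans : IsTransitivePermGroup G) (x : Ω) :
    (({p : ℕ | p.Prime ∧ HasCyclicCompFactor ↥G p ∧
        ¬ HasCyclicCompFactor ↥(G ⊓ MulAction.stabilizer (Equiv.Perm Ω) x) p}).ncard : ℝ) <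
      Real.logb 2 (Fintype.card Ω) := by
  classical
  have hn0 : 0 < Fintype.card Ω := by omega
  set Gx := G ⊓ MulAction.stabilizer (Equiv.Perm Ω) x with hGxdef
  haveI : MulAction.IsPretransitive ↥G Ω := by
    constructor
    intro a b
    obtain ⟨g, hg, hgy⟩ := htrans a b
    exact ⟨⟨g, hg⟩, hgy⟩
  have hstab : MulAction.stabilizer (↥G) x = Gx.subgroupOf G := by
    ext g
    simp only [MulAction.mem_stabilizer_iff, Subgroup.mem_subgroupOf, hGxdef,
      Subgroup.mem_inf, Submonoid.smul_def, Equiv.Perm.smul_def]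
    exact ⟨fun h => ⟨g.2, h⟩, fun h => h.2⟩
  have hidx : (Gx.subgroupOf G).index = Fintype.card Ω := by
    rw [← hstab, MulAction.index_stabilizer_of_transitive, Nat.card_eq_fintype_card]
  set S := {p : ℕ | p.Prime ∧ HasCyclicCompFactor ↥G p ∧ ¬ HasCyclicCompFactor ↥Gx p}
    with hSdef
  have hsub : ∀ p ∈ S, p.Prime ∧ p ∣ Fintype.card Ω := by
    rintro p ⟨hp, hHG, hHGx⟩
    refine ⟨hp, ?_⟩
    by_contra hnd
    apply hHGx
    have h1 : PyberHasPF ↥G p := pyber_hasPF_of_HCF hHG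
    have h2 := pyber_key (Nat.card ↥G) ↥G le_rfl (Gx.subgroupOf G) p hp
      (by rw [hidx]; exact hnd) h1
    have h3 : PyberHasPF ↥Gx p := h2.of_mulEquiv (Subgroup.subgroupOfEquivOfLe inf_le_left)
    exact pyber_HCF_of_hasPF hp h3
  have hfin : S.Finite := by
    apply Set.Finite.subset (Set.finite_Iic (Fintype.card Ω))
    intro p hp
    exact Nat.le_of_dvd hn0 (hsub p hp).2
  have hcardlt : 2 ^ S.ncard < Fintype.card Ω := by
    rw [Set.ncard_eq_toFinset_card S hfin]
    exact pyber_arith hn hfin.toFinset (fun q hq => hsub q (hfin.mem_toFinset.mp hq))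
  rw [Real.lt_logb_iff_rpow_lt (by norm_num) (by exact_mod_cast hn0)]
  rw [Real.rpow_natCast]
  exact_mod_cast hcardlt
end

section
/- (Jordan) Let G be a primitive permutation group on a finite set Ω, let x ∈ Ω and let G_x be the stabilizer of x. If a prime p divides |G_x|, then for every orbit Δ of G_x on Ω with |Δ| ≥ 2, p divides the order of the permutation group induced by G_x on Δ (i.e., the order of the image of the restriction homomorphism G_x → Sym(Δ)). -/
open Equiv

/-- Jordan. Let `G` be a primitive permutation group on a finite set `Ω`,
`x ∈ Ω` with stabiliser `G_x`, and let `p` be a prime dividing `|G_x|`. Then for every orbit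
`Δ` of `G_x` on `Ω` with `|Δ| ≥ 2`, `p` divides the order of the permutation group induced
by `G_x` on `Δ`. -/
theorem jordan_prime_dvd_induced {Ω : Type} [Fintype Ω] (G : Subgroup (Equiv.Perm Ω))
    (hprim : IsPrimitivePermGroup G) (x : Ω) (p : ℕ) (hp : p.Prime)
    (hdvd : p ∣ Nat.card ↥(G ⊓ MulAction.stabilizer (Equiv.Perm Ω) x))
    (Δ : Set Ω) (y : Ω)
    (hΔ : Δ = {z : Ω | ∃ g ∈ G ⊓ MulAction.stabilizer (Equiv.Perm Ω) x, g y = z})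
    (h2 : 2 ≤ Δ.ncard)
    (hinv : ∀ g ∈ G ⊓ MulAction.stabilizer (Equiv.Perm Ω) x, ∀ a ∈ Δ, g a ∈ Δ) :
    p ∣ Nat.card
      ↥((inducedPermHom (G ⊓ MulAction.stabilizer (Equiv.Perm Ω) x) Δ hinv).range) := by
  classical
  by_contra hn
  set H := G ⊓ MulAction.stabilizer (Equiv.Perm Ω) x with hH
  have hHle : H ≤ G := inf_le_left
  set φ := inducedPermHom H Δ hinv with hφ
  have hyΔ : y ∈ Δ := by
    rw [hΔ]; exact ⟨1, one_mem _, rfl⟩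
  haveI : Fact p.Prime := ⟨hp⟩
  haveI : Fintype ↥H := Fintype.ofFinite _
  obtain ⟨σ, hσ⟩ := exists_prime_orderOf_dvd_card (G := ↥H) p
    (by rwa [← Nat.card_eq_fintype_card])
  set s : Equiv.Perm Ω := (σ : Equiv.Perm Ω) with hs
  have hsG : s ∈ G := hHle σ.2
  have hsx : s x = x := by
    have := (Subgroup.mem_inf.mp σ.2).2
    rw [MulAction.mem_stabilizer_iff, Equiv.Perm.smul_def] at this
    exact this
  have hsp : s ^ p = 1 := by
    have : σ ^ p = 1 := by rw [← hσ]; exact pow_orderOf_eq_one σ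
    have := congrArg (fun t : ↥H => (t : Equiv.Perm Ω)) this
    simpa using this
  -- Key: any element of H of order dividing p fixes Δ pointwise
  have key : ∀ τ : Equiv.Perm Ω, ∀ hτ : τ ∈ H, τ ^ p = 1 → ∀ a ∈ Δ, τ a = a := by
    intro τ hτ hτp a ha
    set u : ↥φ.range := ⟨φ ⟨τ, hτ⟩, ⟨⟨τ, hτ⟩, rfl⟩⟩ with hu
    have hup : u ^ p = 1 := by
      apply Subtype.ext
      show (φ ⟨τ, hτ⟩) ^ p = 1
      rw [← map_pow]
      have : (⟨τ, hτ⟩ : ↥H) ^ p = 1 := Subtype.ext (by simpa using hτp)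
      rw [this, map_one]
    have h1 : orderOf u ∣ p := orderOf_dvd_of_pow_eq_one hup
    have h2 : orderOf u ∣ Nat.card ↥φ.range := orderOf_dvd_natCard u
    have hou : orderOf u = 1 := by
      rcases (Nat.Prime.eq_one_or_self_of_dvd hp _ h1) with h | h
      · exact h
      · exact absurd (h ▸ h2) hn
    have hu1 : u = 1 := orderOf_eq_one_iff.mp hou
    have hφ1 : φ ⟨τ, hτ⟩ = 1 := Subtype.ext_iff.mp hu1
    have happ : (φ ⟨τ, hτ⟩) ⟨a, ha⟩ = ⟨a, ha⟩ := by rw [hφ1]; rfl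
    exact Subtype.ext_iff.mp happ
  -- the orbital relation
  set E : Ω → Ω → Prop := fun w z => ∃ g ∈ G, (g : Equiv.Perm Ω) x = w ∧ g y = z with hE
  -- fixed points of s propagate along E
  have stepA : ∀ w z : Ω, s w = w → E w z → s z = z := by
    rintro w z hw ⟨g, hg, rfl, rfl⟩
    have hτH : g⁻¹ * s * g ∈ H := by
      rw [Subgroup.mem_inf]
      refine ⟨mul_mem (mul_mem (inv_mem hg) hsG) hg, ?_⟩
      rw [MulAction.mem_stabilizer_iff, Equiv.Perm.smul_def]
      simp [Equiv.Perm.mul_apply, hw]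
    have hτp : (g⁻¹ * s * g) ^ p = 1 := by
      have : g⁻¹ * s * g = g⁻¹ * s * g⁻¹⁻¹ := by rw [inv_inv]
      rw [this, conj_pow, hsp, mul_one, mul_inv_cancel]
    have hy' : (g⁻¹ * s * g) y = y := key _ hτH hτp y hyΔ
    have h3 : g⁻¹ (s (g y)) = y := by simpa [Equiv.Perm.mul_apply] using hy'
    calc s (g y) = g (g⁻¹ (s (g y))) := by simp
      _ = g y := by rw [h3]
  -- reachability
  set R : Ω → Ω → Prop := Relation.ReflTransGen E with hR
  have Einv : ∀ h ∈ G, ∀ w z : Ω, E w z → E ((h : Equiv.Perm Ω) w) (h z) := by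
    rintro h hh w z ⟨g, hg, rfl, rfl⟩
    exact ⟨h * g, mul_mem hh hg, by simp [Equiv.Perm.mul_apply],
      by simp [Equiv.Perm.mul_apply]⟩
  have Rinv : ∀ h ∈ G, ∀ w z : Ω, R w z → R ((h : Equiv.Perm Ω) w) (h z) := by
    intro h hh w z hr
    induction hr with
    | refl => exact Relation.ReflTransGen.refl
    | tail _ he ih => exact ih.tail (Einv h hh _ _ he)
  set rs : Ω → Set Ω := fun w => {z | R w z} with hrs
  have rs_smul : ∀ h ∈ G, ∀ w : Ω, rs ((h : Equiv.Perm Ω) w) = (h : Equiv.Perm Ω) '' rs w := by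
    intro h hh w
    ext z
    constructor
    · intro hz
      refine ⟨(h : Equiv.Perm Ω)⁻¹ z, ?_, by simp⟩
      have := Rinv _ (inv_mem hh) _ _ hz
      simp at this
      exact this
    · rintro ⟨u, hu, rfl⟩
      exact Rinv h hh _ _ hu
  have rs_card : ∀ h ∈ G, ∀ w : Ω, (rs ((h : Equiv.Perm Ω) w)).ncard = (rs w).ncard := by
    intro h hh w
    rw [rs_smul h hh w]
    exact Set.ncard_image_of_injective _ (Equiv.injective _)
  have rs_eq_card : ∀ w z : Ω, (rs w).ncard = (rs z).ncard := by
    intro w z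
    obtain ⟨h, hh, rfl⟩ := hprim.1 w z
    exact (rs_card h hh w).symm
  have rs_symmeq : ∀ w z : Ω, R w z → rs z = rs w := by
    intro w z hwz
    refine Set.eq_of_subset_of_ncard_le (fun u hu => hwz.trans hu)
      (le_of_eq (rs_eq_card w z)) (Set.toFinite _)
  -- rs x is a block
  have hblock : IsBlockOf G (rs x) := by
    intro h hh
    rcases em (Disjoint ((h : Equiv.Perm Ω) '' rs x) (rs x)) with hd | hnd
    · exact Or.inr hd
    · left
      obtain ⟨w, hw1, hw2⟩ := Set.not_disjoint_iff.mp hnd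
      rw [← rs_smul h hh x] at hw1 ⊢
      have e1 : rs w = rs ((h : Equiv.Perm Ω) x) := rs_symmeq _ _ hw1
      have e2 : rs w = rs x := rs_symmeq _ _ hw2
      rw [← e1, e2]
  have hΔsub : Δ ⊆ rs x := by
    intro d hd
    rw [hΔ] at hd
    obtain ⟨g, hg, hgy⟩ := hd
    have hgx : (g : Equiv.Perm Ω) x = x := by
      have := (Subgroup.mem_inf.mp hg).2
      rw [MulAction.mem_stabilizer_iff, Equiv.Perm.smul_def] at this
      exact this
    exact Relation.ReflTransGen.single ⟨g, (Subgroup.mem_inf.mp hg).1, hgx, hgy⟩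
  have hns : ¬ (rs x).Subsingleton := by
    obtain ⟨a, b, ha, hb, hab⟩ := (Set.one_lt_ncard_iff (Set.toFinite _)).mp
      (lt_of_lt_of_le one_lt_two h2)
    intro hsub
    exact hab (hsub (hΔsub ha) (hΔsub hb))
  have huniv : rs x = Set.univ := (hprim.2 (rs x) hblock).resolve_left hns
  have hall : ∀ z : Ω, s z = z := by
    intro z
    have hz : R x z := by
      have : z ∈ rs x := by rw [huniv]; trivial
      exact this
    induction hz with
    | refl => exact hsx
    | tail _ he ih => exact stepA _ _ ih he
  have hs1 : s = 1 := Equiv.ext fun z => hall z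
  have hσ1 : σ = 1 := Subtype.ext hs1
  rw [hσ1, orderOf_one] at hσ
  exact hp.one_lt.ne' hσ.symm
end

section
/- (Reduction for transitive groups) Let G be a transitive but imprimitive permutation group on a finite set Ω with |Ω| = n, and let G_x be a point stabilizer. Then there exist a transitive permutation group X on a set of size t ≥ 2 with point stabilizer X_α, and a transitive permutation group Y on a set of size m ≥ 2 with point stabilizer Y_β, such that t·m ≤ n and |Comp_A(G_x)| ≤ |Comp_A(X_α)| + |Comp_A(Y_β)| + log₂ n. -/
open Equiv

section Abstract

open Subgroup

variable {G : Type*} [Group G] {H : Type*} [Group H]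

def CRStep (A B : Subgroup G) : Prop :=
  A ≤ B ∧ ∀ a ∈ A, ∀ b ∈ B, b * a * b⁻¹ ∈ A

def CRSN (K : Subgroup G) : Prop := Relation.ReflTransGen CRStep K ⊤

def CRPS (G : Type*) [Group G] (p : ℕ) : Prop :=
  ∃ K : Subgroup G, CRSN K ∧
    ∃ f : ↥K →* Multiplicative (ZMod p), Function.Surjective f

def craset (G : Type*) [Group G] : Set ℕ := {p | p.Prime ∧ CRPS G p}

lemma crsn_top : CRSN (⊤ : Subgroup G) := Relation.ReflTransGen.refl

lemma crnormal_subgroupOf_iff {A B : Subgroup G} (hAB : A ≤ B) :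
    (A.subgroupOf B).Normal ↔ ∀ a ∈ A, ∀ b ∈ B, b * a * b⁻¹ ∈ A := by
  constructor
  · intro hn a ha b hb
    have := hn.conj_mem ⟨a, hAB ha⟩ (by simpa [Subgroup.mem_subgroupOf] using ha) ⟨b, hb⟩
    simpa [Subgroup.mem_subgroupOf] using this
  · intro h
    constructor
    intro n hn g
    simp only [Subgroup.mem_subgroupOf] at hn ⊢
    exact h _ hn _ g.2

lemma crstep_map (f : G →* H) {A B : Subgroup G} (h : CRStep A B) :
    CRStep (A.map f) (B.map f) := by
  refine ⟨Subgroup.map_mono h.1, ?_⟩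
  rintro a ⟨a', ha', rfl⟩ b ⟨b', hb', rfl⟩
  refine ⟨b' * a' * b'⁻¹, h.2 _ ha' _ hb', by simp⟩

lemma crsn_map (f : G →* H) (hf : Function.Surjective f) {K : Subgroup G} (h : CRSN K) :
    CRSN (K.map f) := by
  induction h using Relation.ReflTransGen.head_induction_on with
  | refl => rw [Subgroup.map_top_of_surjective f hf]; exact crsn_top
  | head hac _ ih => exact Relation.ReflTransGen.head (crstep_map f hac) ih

lemma crstep_comap (f : G →* H) {A B : Subgroup H} (h : CRStep A B) :
    CRStep (A.comap f) (B.comap f) := by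
  refine ⟨Subgroup.comap_mono h.1, ?_⟩
  intro a ha b hb
  simp only [Subgroup.mem_comap, map_mul, map_inv] at *
  exact h.2 _ ha _ hb

lemma crsn_comap (f : G →* H) {K : Subgroup H} (h : CRSN K) : CRSN (K.comap f) := by
  induction h using Relation.ReflTransGen.head_induction_on with
  | refl => rw [Subgroup.comap_top]; exact crsn_top
  | head hac _ ih => exact Relation.ReflTransGen.head (crstep_comap f hac) ih

lemma crstep_inf (N : Subgroup G) {A B : Subgroup G} (h : CRStep A B) :
    CRStep (A ⊓ N) (B ⊓ N) := by
  refine ⟨inf_le_inf_right _ h.1, ?_⟩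
  intro a ha b hb
  exact ⟨h.2 _ ha.1 _ hb.1, N.mul_mem (N.mul_mem hb.2 ha.2) (N.inv_mem hb.2)⟩

lemma crstep_subgroupOf {C : Subgroup G} {A B : Subgroup G} (hA : A ≤ C) (hB : B ≤ C)
    (h : CRStep A B) : CRStep (A.subgroupOf C) (B.subgroupOf C) := by
  refine ⟨fun x hx => by
      simp only [Subgroup.mem_subgroupOf] at *; exact h.1 hx, ?_⟩
  intro a ha b hb
  simp only [Subgroup.mem_subgroupOf] at *
  exact h.2 _ ha _ hb

/-- intersect a subnormal chain with a subgroup and view it inside that subgroup -/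
lemma crsn_inf_subgroupOf (N : Subgroup G) {K : Subgroup G} (h : CRSN K) :
    CRSN ((K ⊓ N).subgroupOf N) := by
  have key : ∀ A : Subgroup G, Relation.ReflTransGen CRStep A ⊤ →
      Relation.ReflTransGen CRStep ((A ⊓ N).subgroupOf N) (⊤ : Subgroup ↥N) := by
    intro A hA
    induction hA using Relation.ReflTransGen.head_induction_on with
    | refl => rw [show (⊤ : Subgroup G) ⊓ N = N by simp, Subgroup.subgroupOf_self]
    | head hac _ ih =>
        exact Relation.ReflTransGen.head
          (crstep_subgroupOf inf_le_right inf_le_right (crstep_inf N hac)) ih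
  exact key K h

end Abstract

section PS
open Subgroup
variable {G : Type*} [Group G] {H : Type*} [Group H] {p : ℕ}

lemma crps_of_surjective (φ : G →* H) (hφ : Function.Surjective φ) (h : CRPS H p) :
    CRPS G p := by
  obtain ⟨K, hK, f, hf⟩ := h
  refine ⟨K.comap φ, crsn_comap φ hK, ?_⟩
  have hsurj : Function.Surjective (fun x : ↥(K.comap φ) => (⟨φ x, x.2⟩ : ↥K)) := by
    rintro ⟨k, hk⟩
    obtain ⟨g, rfl⟩ := hφ k
    exact ⟨⟨g, hk⟩, rfl⟩
  refine ⟨f.comp ⟨⟨fun x => ⟨φ x, x.2⟩, by ext; simp⟩, fun x y => by ext; simp⟩, ?_⟩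
  exact hf.comp hsurj

lemma crps_congr (e : G ≃* H) (h : CRPS G p) : CRPS H p :=
  crps_of_surjective e.symm.toMonoidHom e.symm.surjective h

lemma craset_congr (e : G ≃* H) : craset G = craset H := by
  ext q; exact and_congr_right fun _ => ⟨crps_congr e, crps_congr e.symm⟩

/-- if `N ≤ K` is a normal step then primes of `N` are primes of `K` -/
lemma crps_of_step {N K : Subgroup G} (hNK : N ≤ K)
    (hn : ∀ a ∈ N, ∀ b ∈ K, b * a * b⁻¹ ∈ N) (h : CRPS ↥N p) : CRPS ↥K p := by
  obtain ⟨K', hK', f, hf⟩ := h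
  let j : ↥N →* ↥K := Subgroup.inclusion hNK
  have hj : Function.Injective j := Subgroup.inclusion_injective hNK
  refine ⟨K'.map j, ?_, ?_⟩
  · -- chain:  map j K'  →*  map j ⊤ = N.subgroupOf K  →  ⊤
    have h1 : Relation.ReflTransGen CRStep (K'.map j) ((⊤ : Subgroup ↥N).map j) := by
      have : ∀ A : Subgroup ↥N, Relation.ReflTransGen CRStep A ⊤ →
          Relation.ReflTransGen CRStep (A.map j) ((⊤ : Subgroup ↥N).map j) := by
        intro A hA
        induction hA using Relation.ReflTransGen.head_induction_on with
        | refl => exact Relation.ReflTransGen.refl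
        | head hac _ ih => exact Relation.ReflTransGen.head (crstep_map j hac) ih
      exact this _ hK'
    have h2 : (⊤ : Subgroup ↥N).map j = N.subgroupOf K := by
      ext x
      simp only [Subgroup.mem_map, Subgroup.mem_subgroupOf]
      constructor
      · rintro ⟨y, -, rfl⟩; exact y.2
      · intro hx; exact ⟨⟨(x : G), hx⟩, trivial, rfl⟩
    have h3 : CRStep (N.subgroupOf K) ⊤ := by
      refine ⟨le_top, ?_⟩
      intro a ha b _
      simp only [Subgroup.mem_subgroupOf] at *
      exact hn _ ha _ b.2
    rw [h2] at h1
    exact h1.trans (Relation.ReflTransGen.single h3)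
  · exact ⟨f.comp (Subgroup.equivMapOfInjective K' j hj).symm.toMonoidHom,
      hf.comp (Subgroup.equivMapOfInjective K' j hj).symm.surjective⟩

lemma crps_of_normal {N : Subgroup G} (hn : ∀ a ∈ N, ∀ g : G, g * a * g⁻¹ ∈ N)
    (h : CRPS ↥N p) : CRPS G p := by
  have := crps_of_step (le_top (a := N)) (fun a ha b _ => hn a ha b) h
  exact crps_congr Subgroup.topEquiv this

lemma crps_dvd [Finite G] (h : CRPS G p) (hp : p.Prime) : p ∣ Nat.card G := by
  obtain ⟨K, -, f, hf⟩ := h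
  haveI : Fact p.Prime := ⟨hp⟩
  have h1 : Nat.card (Multiplicative (ZMod p)) = p := by
    simp [Nat.card_eq_fintype_card]
  calc p = Nat.card (Multiplicative (ZMod p)) := h1.symm
    _ ∣ Nat.card ↥K := Subgroup.card_dvd_of_surjective f hf
    _ ∣ Nat.card G := Subgroup.card_subgroup_dvd_card K

lemma craset_finite [Finite G] : (craset G).Finite := by
  have hpos : 0 < Nat.card G := Nat.card_pos
  apply Set.Finite.subset (Set.finite_Icc 1 (Nat.card G))
  rintro q ⟨hq, hps⟩
  have := Nat.le_of_dvd hpos (crps_dvd hps hq)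
  exact ⟨hq.one_lt.le, this⟩

lemma craset_of_subsingleton [Subsingleton G] : craset G = ∅ := by
  ext q
  simp only [Set.mem_empty_iff_false, iff_false, craset, Set.mem_setOf_eq, not_and]
  intro hq hps
  have h1 : Nat.card G = 1 := Nat.card_eq_one_iff_unique.2 ⟨⟨fun a b => Subsingleton.elim a b⟩, ⟨1⟩⟩
  have h2 := crps_dvd hps hq
  rw [h1, Nat.dvd_one] at h2
  exact hq.one_lt.ne' h2

lemma zmod_subgroup_eq (hp : p.Prime) (T : Subgroup (Multiplicative (ZMod p))) :
    T = ⊥ ∨ T = ⊤ := by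
  haveI : Fact p.Prime := ⟨hp⟩
  have hcard : Nat.card (Multiplicative (ZMod p)) = p := by
    simp [Nat.card_eq_fintype_card]
  have hdvd : Nat.card ↥T ∣ p := by
    have := Subgroup.card_subgroup_dvd_card T
    rwa [hcard] at this
  rcases (Nat.Prime.eq_one_or_self_of_dvd hp _ hdvd) with h | h
  · exact Or.inl (Subgroup.card_eq_one.1 h)
  · exact Or.inr (T.eq_top_of_card_eq (by rw [h, hcard]))

/-- the key splitting lemma: primes of `G` come from the kernel or the image of a
surjection. -/
lemma crps_cases (φ : G →* H) (hφ : Function.Surjective φ) (hp : p.Prime)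
    (h : CRPS G p) : CRPS ↥φ.ker p ∨ CRPS H p := by
  classical
  obtain ⟨K, hK, f, hf⟩ := h
  set D : Subgroup G := K ⊓ φ.ker with hD
  set T : Subgroup (Multiplicative (ZMod p)) := (D.subgroupOf K).map f with hT
  rcases zmod_subgroup_eq hp T with hbot | htop
  · -- D is mapped to 1 by f : factor f through the image of K in H
    right
    have hker : ∀ x : ↥K, (x : G) ∈ φ.ker → f x = 1 := by
      intro x hx
      have : f x ∈ T := ⟨x, by simp [Subgroup.mem_subgroupOf, hD, x.2, hx], rfl⟩
      rw [hbot] at this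
      simpa using this
    -- the corestriction of φ to the image of K
    have hmem : ∀ x : ↥K, φ x ∈ K.map φ := fun x => ⟨x, x.2, rfl⟩
    let ρ : ↥K →* ↥(K.map φ) :=
      { toFun := fun x => ⟨φ x, hmem x⟩
        map_one' := by ext; simp
        map_mul' := fun x y => by ext; simp }
    have hρ : Function.Surjective ρ := by
      rintro ⟨y, x, hx, rfl⟩
      exact ⟨⟨x, hx⟩, rfl⟩
    have hkerρ : ρ.ker ≤ f.ker := by
      intro x hx
      have : φ x = 1 := congrArg Subtype.val (hx : ρ x = 1)
      exact hker x this
    let e := QuotientGroup.quotientKerEquivOfSurjective ρ hρ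
    let F : ↥(K.map φ) →* Multiplicative (ZMod p) :=
      (QuotientGroup.lift ρ.ker f hkerρ).comp e.symm.toMonoidHom
    refine ⟨K.map φ, crsn_map φ hφ hK, F, ?_⟩
    have hFρ : ∀ x : ↥K, F (ρ x) = f x := by
      intro x
      have h1 : e.symm (ρ x) = QuotientGroup.mk x := by
        rw [MulEquiv.symm_apply_eq]
        rfl
      simp only [F, MonoidHom.comp_apply, MulEquiv.coe_toMonoidHom, h1]
      rfl
    intro c
    obtain ⟨x, rfl⟩ := hf c
    exact ⟨ρ x, hFρ x⟩
  · -- D surjects onto the cyclic group: the prime lives in the kernel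
    left
    refine ⟨D.subgroupOf φ.ker, crsn_inf_subgroupOf φ.ker hK, ?_⟩
    have hDK : D ≤ K := inf_le_left
    have hg : ∀ x : ↥(D.subgroupOf φ.ker), ((x : ↥φ.ker) : G) ∈ K :=
      fun x => hDK (Subgroup.mem_subgroupOf.1 x.2)
    let F : ↥(D.subgroupOf φ.ker) →* Multiplicative (ZMod p) :=
      MonoidHom.mk' (fun x => f ⟨((x : ↥φ.ker) : G), hg x⟩) (by
        intro x y
        have h1 : (⟨(↑(↑(x * y) : ↥φ.ker) : G), hg (x * y)⟩ : ↥K)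
            = ⟨(↑(↑x : ↥φ.ker) : G), hg x⟩ * ⟨(↑(↑y : ↥φ.ker) : G), hg y⟩ := Subtype.ext rfl
        show f _ = f _ * f _
        rw [h1, map_mul])
    refine ⟨F, ?_⟩
    intro c
    have hc : c ∈ T := htop ▸ Subgroup.mem_top c
    obtain ⟨x, hxD, rfl⟩ := hc
    have hxD' : (x : G) ∈ D := Subgroup.mem_subgroupOf.1 hxD
    refine ⟨⟨⟨(x : G), hxD'.2⟩, by simpa [Subgroup.mem_subgroupOf] using hxD'⟩, ?_⟩
    show f _ = f x
    congr 1

end PS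

section Equivalence
open Subgroup
variable {G : Type*} [Group G] {p : ℕ}

def CRStepMax (A B : Subgroup G) : Prop :=
  A < B ∧ ((A.subgroupOf B)).Normal ∧
    ∀ K : Subgroup G, A < K → K ≤ B → (K.subgroupOf B).Normal → K = B

def CRCC (A B : Subgroup G) : Prop := Relation.ReflTransGen CRStepMax A B

lemma card_lt_of_lt [Finite G] {A B : Subgroup G} (h : A < B) :
    Nat.card ↥A < Nat.card ↥B := by
  have hinj : Function.Injective (Subgroup.inclusion h.le) := Subgroup.inclusion_injective h.le
  have hle : Nat.card ↥A ≤ Nat.card ↥B := Nat.card_le_card_of_injective _ hinj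
  rcases lt_or_eq_of_le hle with hlt | heq
  · exact hlt
  · exfalso
    have hbij : Function.Bijective (Subgroup.inclusion h.le) := by
      rw [Nat.bijective_iff_injective_and_card]
      exact ⟨hinj, heq⟩
    obtain ⟨x, hxB, hxA⟩ := SetLike.exists_of_lt h
    obtain ⟨a, ha⟩ := hbij.2 ⟨x, hxB⟩
    have : (x : G) ∈ A := by
      have := congrArg Subtype.val ha
      simp only [Subgroup.coe_inclusion] at this
      rw [← this]
      exact a.2
    exact hxA this

lemma crcc_of_step [Finite G] {A B : Subgroup G} (hstep : CRStep A B) : CRCC A B := by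
  generalize hcb : Nat.card ↥B = n at *
  induction n using Nat.strong_induction_on generalizing A B with
  | _ n ih =>
  rcases eq_or_lt_of_le hstep.1 with heq | hlt
  · exact heq ▸ Relation.ReflTransGen.refl
  · set s : Set (Subgroup G) :=
      {M | A ≤ M ∧ M < B ∧ ∀ a ∈ M, ∀ b ∈ B, b * a * b⁻¹ ∈ M} with hs
    have hAs : A ∈ s := ⟨le_rfl, hlt, hstep.2⟩
    obtain ⟨M, hMs, hMmax⟩ := Set.Finite.exists_maximalFor
      (fun M : Subgroup G => Nat.card ↥M) s (Set.toFinite s) ⟨A, hAs⟩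
    have hMB : M < B := hMs.2.1
    have hstepmax : CRStepMax M B := by
      refine ⟨hMB, (crnormal_subgroupOf_iff hMB.le).2 hMs.2.2, ?_⟩
      intro K hMK hKB hKn
      by_contra hne
      have hKs : K ∈ s := ⟨hMs.1.trans hMK.le, lt_of_le_of_ne hKB hne,
        (crnormal_subgroupOf_iff hKB).1 hKn⟩
      have h1 := hMmax (j := K) hKs (card_lt_of_lt hMK).le
      exact absurd h1 (not_le.2 (card_lt_of_lt hMK))
    have hstepAM : CRStep A M := by
      refine ⟨hMs.1, ?_⟩
      intro a ha b hb
      exact hstep.2 a ha b (hMB.le hb)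
    have hcc : CRCC A M := ih (Nat.card ↥M) (hcb ▸ card_lt_of_lt hMB) hstepAM rfl
    exact hcc.tail hstepmax

def CRChainTo (A : Subgroup G) : Prop :=
  ∃ (n : ℕ) (c : Fin (n+1) → Subgroup G), c 0 = A ∧ c (Fin.last n) = ⊤ ∧
    ∀ i : Fin n, CRStepMax (c i.castSucc) (c i.succ)

def CRChainToW (A K₀ K : Subgroup G) : Prop :=
  ∃ (n : ℕ) (c : Fin (n+1) → Subgroup G), c 0 = A ∧ c (Fin.last n) = ⊤ ∧
    (∀ i : Fin n, CRStepMax (c i.castSucc) (c i.succ)) ∧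
    ∃ i : Fin n, c i.castSucc = K₀ ∧ c i.succ = K

lemma crchainTo_top : CRChainTo (⊤ : Subgroup G) :=
  ⟨0, fun _ => ⊤, rfl, rfl, fun i => absurd i.2 (by omega)⟩

section Prepend
variable {n : ℕ} {c : Fin (n+1) → Subgroup G} {A : Subgroup G}

lemma prepend_steps (hsteps : ∀ i : Fin n, CRStepMax (c i.castSucc) (c i.succ))
    (hAB : CRStepMax A (c 0)) :
    ∀ i : Fin (n+1), CRStepMax ((Fin.cons A c : Fin (n+2) → Subgroup G) i.castSucc)
      ((Fin.cons A c : Fin (n+2) → Subgroup G) i.succ) := by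
  intro i
  induction i using Fin.cases with
  | zero =>
      rw [show ((0 : Fin (n+1)).castSucc) = 0 from rfl, Fin.cons_zero,
        show ((0 : Fin (n+1)).succ) = (0 : Fin (n+1)).succ from rfl, Fin.cons_succ]
      exact hAB
  | succ j =>
      have h1 : (j.succ).castSucc = (j.castSucc).succ := by
        ext; simp
      rw [h1, Fin.cons_succ, Fin.cons_succ]
      exact hsteps j

end Prepend

lemma crchainTo_cons {A B : Subgroup G} (hAB : CRStepMax A B) (h : CRChainTo B) :
    CRChainTo A := by
  obtain ⟨n, c, h0, hlast, hsteps⟩ := h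
  refine ⟨n+1, Fin.cons A c, Fin.cons_zero _ _, ?_, prepend_steps hsteps (h0 ▸ hAB)⟩
  rw [show (Fin.last (n+1)) = (Fin.last n).succ from (Fin.succ_last n).symm, Fin.cons_succ]
  exact hlast

lemma crchainToW_cons {A B K₀ K : Subgroup G} (hAB : CRStepMax A B)
    (h : CRChainToW B K₀ K) : CRChainToW A K₀ K := by
  obtain ⟨n, c, h0, hlast, hsteps, i, hi1, hi2⟩ := h
  refine ⟨n+1, Fin.cons A c, Fin.cons_zero _ _, ?_, prepend_steps hsteps (h0 ▸ hAB),
    i.succ, ?_, ?_⟩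
  · rw [show (Fin.last (n+1)) = (Fin.last n).succ from (Fin.succ_last n).symm, Fin.cons_succ]
    exact hlast
  · have h1 : (i.succ).castSucc = (i.castSucc).succ := by ext; simp
    rw [h1, Fin.cons_succ]
    exact hi1
  · rw [show (i.succ).succ = (i.succ).succ from rfl, Fin.cons_succ]
    exact hi2

lemma crcc_to_chainTo {A : Subgroup G} (h : CRCC A ⊤) : CRChainTo A := by
  induction h using Relation.ReflTransGen.head_induction_on with
  | refl => exact crchainTo_top
  | head hac _ ih => exact crchainTo_cons hac ih

lemma crcc_to_chainToW {A K₀ K : Subgroup G} (h1 : CRCC A K₀) (h2 : CRStepMax K₀ K)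
    (h3 : CRCC K ⊤) : CRChainToW A K₀ K := by
  have base : CRChainToW K₀ K₀ K := by
    obtain ⟨n, c, h0, hlast, hsteps⟩ := crcc_to_chainTo h3
    refine ⟨n+1, Fin.cons K₀ c, Fin.cons_zero _ _, ?_, prepend_steps hsteps (h0 ▸ h2),
      0, ?_, ?_⟩
    · rw [show (Fin.last (n+1)) = (Fin.last n).succ from (Fin.succ_last n).symm, Fin.cons_succ]
      exact hlast
    · rw [show ((0 : Fin (n+1)).castSucc) = 0 from rfl, Fin.cons_zero]
    · rw [Fin.cons_succ]; exact h0
  clear h2 h3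
  induction h1 using Relation.ReflTransGen.head_induction_on with
  | refl => exact base
  | head hac _ ih => exact crchainToW_cons hac ih

end Equivalence

section MainEquiv
open Subgroup
variable {G : Type*} [Group G] {p : ℕ}

lemma hasCyclic_to_crps (h : HasCyclicCompFactor G p) : CRPS G p := by
  obtain ⟨n, c, ⟨h0, hlast, hsteps⟩, i, f, hfs, hker⟩ := h
  refine ⟨c i.succ, ?_, f, hfs⟩
  -- climb from c i.succ to the top
  have key : ∀ d : ℕ, ∀ j : ℕ, ∀ hj : j ≤ n, j + d = n →
      Relation.ReflTransGen CRStep (c ⟨j, Nat.lt_succ_of_le hj⟩) ⊤ := by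
    intro d
    induction d with
    | zero =>
        intro j hj hjd
        have hj' : j = n := by omega
        have heq : (⟨j, Nat.lt_succ_of_le hj⟩ : Fin (n+1)) = Fin.last n := by
          ext; simp [Fin.val_last, hj']
        rw [heq, hlast]
    | succ d ih =>
        intro j hj hjd
        have hjn : j < n := by omega
        have hstep := hsteps ⟨j, hjn⟩
        have e1 : (Fin.castSucc ⟨j, hjn⟩ : Fin (n+1)) = ⟨j, Nat.lt_succ_of_le hj⟩ := by
          ext; rfl
        have e2 : (Fin.succ ⟨j, hjn⟩ : Fin (n+1)) = ⟨j+1, Nat.lt_succ_of_le hjn⟩ := by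
          ext; rfl
        rw [e1, e2] at hstep
        refine Relation.ReflTransGen.head ⟨hstep.1.le,
          (crnormal_subgroupOf_iff hstep.1.le).1 hstep.2.1⟩ ?_
        exact ih (j+1) hjn (by omega)
  have : Relation.ReflTransGen CRStep (c i.succ) ⊤ := by
    have e : (⟨i.1 + 1, Nat.lt_succ_of_le i.2⟩ : Fin (n+1)) = i.succ := by ext; rfl
    rw [← e]
    exact key (n - (i.1+1)) (i.1+1) i.2 (by omega)
  exact this

lemma crsn_to_crcc [Finite G] {K : Subgroup G} (h : CRSN K) : CRCC K ⊤ := by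
  induction h using Relation.ReflTransGen.head_induction_on with
  | refl => exact Relation.ReflTransGen.refl
  | head hac _ ih => exact (crcc_of_step hac).trans ih

lemma crps_to_hasCyclic [Finite G] (hp : p.Prime) (h : CRPS G p) :
    HasCyclicCompFactor G p := by
  classical
  haveI : Fact p.Prime := ⟨hp⟩
  obtain ⟨K, hSN, f, hf⟩ := h
  set K₀ : Subgroup G := (f.ker).map K.subtype with hK₀
  have hK₀K : K₀ ≤ K := Subgroup.map_subtype_le _
  -- K₀ < K
  obtain ⟨cne, hcne⟩ := exists_ne (1 : Multiplicative (ZMod p))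
  obtain ⟨x, hx⟩ := hf cne
  have hxK₀ : (x : G) ∉ K₀ := by
    rintro ⟨y, hy, hyx⟩
    have : y = x := Subtype.ext hyx
    subst this
    rw [(hy : f y = 1)] at hx
    exact hcne hx.symm
  have hK₀lt : K₀ < K := by
    rcases lt_or_eq_of_le hK₀K with h | h
    · exact h
    · exfalso; rw [h] at hxK₀; exact hxK₀ x.2
  have hstepmax : CRStepMax K₀ K := by
    refine ⟨hK₀lt, (crnormal_subgroupOf_iff hK₀K).2 ?_, ?_⟩
    · rintro a ⟨a', ha', rfl⟩ b hb
      refine ⟨(⟨b, hb⟩ : ↥K) * a' * (⟨b, hb⟩ : ↥K)⁻¹, ?_, rfl⟩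
      have ha'' : f a' = 1 := ha'
      show f _ = 1
      rw [map_mul, map_mul, ha'', map_inv, mul_one, mul_inv_cancel]
    · intro K' hK₀K' hK'K _
      set T' : Subgroup (Multiplicative (ZMod p)) := (K'.subgroupOf K).map f with hT'
      have hT'ne : T' ≠ ⊥ := by
        obtain ⟨z, hzK', hzK₀⟩ := SetLike.exists_of_lt hK₀K'
        intro hbot
        have hz1 : f ⟨z, hK'K hzK'⟩ ∈ T' :=
          ⟨⟨z, hK'K hzK'⟩, by simpa [Subgroup.mem_subgroupOf] using hzK', rfl⟩
        rw [hbot, Subgroup.mem_bot] at hz1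
        exact hzK₀ ⟨⟨z, hK'K hzK'⟩, hz1, rfl⟩
      have hT'top : T' = ⊤ := (zmod_subgroup_eq hp T').resolve_left hT'ne
      -- show K ≤ K'
      refine le_antisymm hK'K ?_
      intro k hk
      have : f ⟨k, hk⟩ ∈ T' := hT'top ▸ Subgroup.mem_top _
      obtain ⟨x', hx'K', hx'⟩ := this
      have hker : (⟨k, hk⟩ : ↥K) * x'⁻¹ ∈ f.ker := by
        rw [MonoidHom.mem_ker, map_mul, map_inv, hx', mul_inv_cancel]
      have h1 : (k * (↑x')⁻¹ : G) ∈ K₀ := ⟨_, hker, rfl⟩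
      have h2 : (↑x' : G) ∈ K' := Subgroup.mem_subgroupOf.1 hx'K'
      have := K'.mul_mem (hK₀K'.le h1) h2
      simpa using this
  have hcc1 : CRCC (⊥ : Subgroup G) K₀ :=
    crcc_of_step ⟨bot_le, by
      intro a ha b _
      rw [Subgroup.mem_bot] at ha
      simp [ha]⟩
  have hcc2 : CRCC K ⊤ := crsn_to_crcc hSN
  obtain ⟨n, c, h0, hlast, hsteps, i, hi1, hi2⟩ := crcc_to_chainToW hcc1 hstepmax hcc2
  refine ⟨n, c, ⟨h0, hlast, fun j => ⟨(hsteps j).1, (hsteps j).2.1, (hsteps j).2.2⟩⟩, i, ?_⟩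
  rw [hi1, hi2]
  refine ⟨f, hf, ?_⟩
  rw [hK₀]
  exact (Subgroup.comap_map_eq_self_of_injective (K.subtype_injective) f.ker).symm

theorem craset_eq (G : Type*) [Group G] [Finite G] :
    {p : ℕ | p.Prime ∧ HasCyclicCompFactor G p} = craset G := by
  ext q
  exact and_congr_right fun hq => ⟨hasCyclic_to_crps, crps_to_hasCyclic hq⟩

theorem abelianCompFactorCount_eq (G : Type*) [Group G] [Finite G] :
    abelianCompFactorCount G = (craset G).ncard := by
  rw [abelianCompFactorCount, craset_eq]

end MainEquiv

section PermInfra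
open Subgroup Equiv

-- craset helper lemmas
variable {G : Type*} [Group G] {H : Type*} [Group H]

lemma craset_split (φ : G →* H) (hφ : Function.Surjective φ) :
    craset G ⊆ craset ↥φ.ker ∪ craset H := by
  rintro q ⟨hq, hps⟩
  rcases crps_cases φ hφ hq hps with h | h
  · exact Or.inl ⟨hq, h⟩
  · exact Or.inr ⟨hq, h⟩

lemma craset_le_of_surj (φ : G →* H) (hφ : Function.Surjective φ) :
    craset H ⊆ craset G := fun q hq => ⟨hq.1, crps_of_surjective φ hφ hq.2⟩

lemma craset_le_of_step {N K : Subgroup G} (h1 : N ≤ K)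
    (h2 : ∀ a ∈ N, ∀ b ∈ K, b * a * b⁻¹ ∈ N) :
    craset ↥N ⊆ craset ↥K := fun q hq => ⟨hq.1, crps_of_step h1 h2 hq.2⟩

lemma craset_subgroupOf {N K : Subgroup G} (h : N ≤ K) :
    craset ↥(N.subgroupOf K) = craset ↥N :=
  craset_congr (Subgroup.subgroupOfEquivOfLe h)

/-- multiplicative version of permCongr -/
def permCongrMul {α β : Type*} (e : α ≃ β) : Perm α ≃* Perm β :=
  { Equiv.permCongr e with
    map_mul' := fun σ τ => by
      ext b
      simp [Equiv.permCongr_apply, Equiv.Perm.mul_apply] }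

lemma permCongrMul_apply {α β : Type*} (e : α ≃ β) (σ : Perm α) (b : β) :
    permCongrMul e σ b = e (σ (e.symm b)) := rfl

/-- transporting a permutation group along an equivalence of the underlying sets -/
lemma perm_transport {Θ Θ' : Type*} (e : Θ ≃ Θ') (P : Subgroup (Perm Θ)) (θ : Θ) :
    ∃ P' : Subgroup (Perm Θ'),
      (IsTransitivePermGroup P → IsTransitivePermGroup P') ∧
      craset ↥P' = craset ↥P ∧
      craset ↥(P' ⊓ MulAction.stabilizer (Perm Θ') (e θ)) =
        craset ↥(P ⊓ MulAction.stabilizer (Perm Θ) θ) := by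
  classical
  set Φ := permCongrMul e with hΦ
  refine ⟨P.map Φ.toMonoidHom, ?_, ?_, ?_⟩
  · intro htr a b
    obtain ⟨g, hg, hgab⟩ := htr (e.symm a) (e.symm b)
    refine ⟨Φ g, ⟨g, hg, rfl⟩, ?_⟩
    rw [permCongrMul_apply, hgab, Equiv.apply_symm_apply]
  · exact (craset_congr (Subgroup.equivMapOfInjective P Φ.toMonoidHom Φ.injective)).symm
  · have hmap : (P ⊓ MulAction.stabilizer (Perm Θ) θ).map Φ.toMonoidHom =
        P.map Φ.toMonoidHom ⊓ MulAction.stabilizer (Perm Θ') (e θ) := by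
      ext σ'
      simp only [Subgroup.mem_map, Subgroup.mem_inf, MulAction.mem_stabilizer_iff]
      constructor
      · rintro ⟨σ, ⟨hσP, hσθ⟩, rfl⟩
        refine ⟨⟨σ, hσP, rfl⟩, ?_⟩
        show Φ σ (e θ) = e θ
        rw [permCongrMul_apply, Equiv.symm_apply_apply]
        rw [show σ θ = θ from hσθ]
      · rintro ⟨⟨σ, hσP, rfl⟩, hθ⟩
        refine ⟨σ, ⟨hσP, ?_⟩, rfl⟩
        have : Φ σ (e θ) = e θ := hθ
        rw [permCongrMul_apply, Equiv.symm_apply_apply] at this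
        exact e.injective.eq_iff.1 this
    rw [← hmap]
    exact (craset_congr (Subgroup.equivMapOfInjective _ Φ.toMonoidHom Φ.injective)).symm

variable {Δ : Type*}

/-- setwise stabilizer of a set, inside the full permutation group -/
def permSetStab (B : Set Δ) : Subgroup (Perm Δ) where
  carrier := {σ | σ '' B = B}
  one_mem' := by simp
  mul_mem' := by
    intro σ τ hσ hτ
    show (σ * τ) '' B = B
    have : (σ * τ : Perm Δ) '' B = σ '' (τ '' B) := by
      rw [← Set.image_comp]; rfl
    rw [this, hτ, hσ]
  inv_mem' := by
    intro σ hσ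
    show (σ⁻¹ : Perm Δ) '' B = B
    conv_lhs => rw [← (hσ : σ '' B = B)]
    rw [← Set.image_comp]
    simp

lemma mem_permSetStab {B : Set Δ} {σ : Perm Δ} : σ ∈ permSetStab B ↔ σ '' B = B := Iff.rfl

/-- pointwise stabilizer of a set -/
def permPointStab (B : Set Δ) : Subgroup (Perm Δ) where
  carrier := {σ | ∀ a ∈ B, σ a = a}
  one_mem' := by simp
  mul_mem' := by
    intro σ τ hσ hτ a ha
    show σ (τ a) = a
    rw [hτ a ha, hσ a ha]
  inv_mem' := by
    intro σ hσ a ha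
    show σ⁻¹ a = a
    conv_lhs => rw [← hσ a ha]
    simp

lemma mem_permPointStab {B : Set Δ} {σ : Perm Δ} :
    σ ∈ permPointStab B ↔ ∀ a ∈ B, σ a = a := Iff.rfl

lemma image_eq_of_mem_permSetStab {B : Set Δ} {σ : Perm Δ} (h : σ ∈ permSetStab B)
    {a : Δ} (ha : a ∈ B) : σ a ∈ B := by
  rw [← (h : σ '' B = B)]; exact ⟨a, ha, rfl⟩

end PermInfra

section Blocks
open Subgroup Equiv

variable {Δ : Type*}

lemma perm_image_mul (σ τ : Perm Δ) (A : Set Δ) : (σ * τ) '' A = σ '' (τ '' A) := by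
  rw [← Set.image_comp]; rfl

lemma perm_image_inv_eq {σ : Perm Δ} {A C : Set Δ} (h : σ '' A = C) :
    (σ⁻¹ : Perm Δ) '' C = A := by
  rw [← h, ← Set.image_comp]
  have h1 : (⇑(σ⁻¹ : Perm Δ) ∘ ⇑σ) = id := funext fun a => Equiv.symm_apply_apply σ a
  rw [h1, Set.image_id]

variable (Γ : Subgroup (Perm Δ)) (B : Set Δ)

/-- the set of Γ-translates of `B` -/
abbrev blockOrbit : Type _ := {S : Set Δ // ∃ g ∈ Γ, (g : Perm Δ) '' B = S}

/-- the kernel of the action on the translates of `B`, inside the full permutation group -/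
def blockKer : Subgroup (Perm Δ) where
  carrier := {σ | ∀ S : Set Δ, (∃ g ∈ Γ, (g : Perm Δ) '' B = S) → σ '' S = S}
  one_mem' := by intro S _; simp
  mul_mem' := by
    intro σ τ hσ hτ S hS
    show (σ * τ) '' S = S
    rw [perm_image_mul, hτ S hS, hσ S hS]
  inv_mem' := by
    intro σ hσ S hS
    exact perm_image_inv_eq (hσ S hS)

lemma mem_blockKer {σ : Perm Δ} :
    σ ∈ blockKer Γ B ↔ ∀ S : Set Δ, (∃ g ∈ Γ, (g : Perm Δ) '' B = S) → σ '' S = S := Iff.rfl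

/-- the permutation of the set of translates induced by an element of Γ -/
def blockPerm (g : ↥Γ) : Perm (blockOrbit Γ B) where
  toFun S := ⟨(g : Perm Δ) '' S.1, by
    obtain ⟨h, hh, hhS⟩ := S.2
    exact ⟨(g : Perm Δ) * h, Γ.mul_mem g.2 hh, by rw [perm_image_mul, hhS]⟩⟩
  invFun S := ⟨((g⁻¹ : ↥Γ) : Perm Δ) '' S.1, by
    obtain ⟨h, hh, hhS⟩ := S.2
    exact ⟨((g⁻¹ : ↥Γ) : Perm Δ) * h, Γ.mul_mem (Γ.inv_mem g.2) hh, by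
      rw [perm_image_mul, hhS]⟩⟩
  left_inv := by
    intro S
    apply Subtype.ext
    show ((g⁻¹ : ↥Γ) : Perm Δ) '' ((g : Perm Δ) '' S.1) = S.1
    rw [show ((g⁻¹ : ↥Γ) : Perm Δ) = ((g : ↥Γ) : Perm Δ)⁻¹ from rfl]
    exact perm_image_inv_eq rfl
  right_inv := by
    intro S
    apply Subtype.ext
    show (g : Perm Δ) '' (((g⁻¹ : ↥Γ) : Perm Δ) '' S.1) = S.1
    rw [show ((g⁻¹ : ↥Γ) : Perm Δ) = ((g : ↥Γ) : Perm Δ)⁻¹ from rfl]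
    have := perm_image_inv_eq (σ := ((g : ↥Γ) : Perm Δ)⁻¹) (A := S.1) rfl
    simpa using this

/-- the action on the set of translates, as a homomorphism -/
def blockHom : ↥Γ →* Perm (blockOrbit Γ B) :=
  MonoidHom.mk' (blockPerm Γ B) (by
    intro g h
    refine Equiv.ext fun S => Subtype.ext ?_
    show ((g * h : ↥Γ) : Perm Δ) '' S.1 = (g : Perm Δ) '' ((h : Perm Δ) '' S.1)
    rw [← perm_image_mul]
    rfl)

lemma blockHom_apply (g : ↥Γ) (S : blockOrbit Γ B) :
    ((blockHom Γ B g S : blockOrbit Γ B) : Set Δ) = (g : Perm Δ) '' S.1 := rfl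

variable {Γ B}

/-- two translates of a block are equal or disjoint -/
lemma translate_eq_or_disjoint (hblock : IsBlockOf Γ B) {g₁ g₂ : Perm Δ}
    (h₁ : g₁ ∈ Γ) (h₂ : g₂ ∈ Γ) :
    g₁ '' B = g₂ '' B ∨ Disjoint (g₁ '' B) (g₂ '' B) := by
  rcases hblock (g₂⁻¹ * g₁) (Γ.mul_mem (Γ.inv_mem h₂) h₁) with h | h
  · left
    have := congrArg (fun A => g₂ '' A) h
    rw [← perm_image_mul, ← mul_assoc, mul_inv_cancel, one_mul] at this
    rw [this]
  · right
    rw [perm_image_mul] at h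
    rw [Set.disjoint_iff_inter_eq_empty]
    by_contra hne
    obtain ⟨a, ha1, ha2⟩ := Set.nonempty_iff_ne_empty.2 hne
    have hmem : (g₂⁻¹ : Perm Δ) a ∈ (g₂⁻¹ : Perm Δ) '' (g₁ '' B) := ⟨a, ha1, rfl⟩
    have hmem2 : (g₂⁻¹ : Perm Δ) a ∈ B := by
      obtain ⟨w, hw, hwa⟩ := ha2
      rw [← hwa]
      simpa using hw
    exact Set.disjoint_left.1 h hmem hmem2

/-- every point lies in a unique translate -/
lemma exists_unique_block (htrans : IsTransitivePermGroup Γ) (hblock : IsBlockOf Γ B)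
    (hx : ∃ x, x ∈ B) (a : Δ) :
    ∃ S : blockOrbit Γ B, a ∈ S.1 ∧ ∀ S' : blockOrbit Γ B, a ∈ S'.1 → S' = S := by
  obtain ⟨x, hxB⟩ := hx
  obtain ⟨g, hg, hga⟩ := htrans x a
  refine ⟨⟨g '' B, g, hg, rfl⟩, ⟨x, hxB, hga⟩, ?_⟩
  rintro ⟨S', hS'⟩ ha'
  obtain ⟨g', hg', rfl⟩ := hS'
  apply Subtype.ext
  show g' '' B = g '' B
  rcases translate_eq_or_disjoint hblock hg' hg with h | h
  · exact h
  · exfalso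
    exact Set.disjoint_left.1 h ha' ⟨x, hxB, hga⟩

end Blocks

section CoreLemmas
open Subgroup Equiv

variable {Δ : Type*} (Γ : Subgroup (Perm Δ)) (B : Set Δ)

lemma sbinv : ∀ g ∈ Γ ⊓ permSetStab B, ∀ a ∈ B, (g : Perm Δ) a ∈ B :=
  fun _ hg _ ha => image_eq_of_mem_permSetStab hg.2 ha

/-- the group induced on the block `B` by its setwise stabiliser in `Γ` -/
def bigX : Subgroup (Perm ↥B) := (inducedPermHom (Γ ⊓ permSetStab B) B (sbinv Γ B)).range

lemma kerinvS (S : blockOrbit Γ B) :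
    ∀ g ∈ Γ ⊓ blockKer Γ B, ∀ a ∈ S.1, (g : Perm Δ) a ∈ S.1 := by
  intro g hg a ha
  have h1 : (g : Perm Δ) '' S.1 = S.1 := hg.2 S.1 S.2
  rw [← h1]
  exact ⟨a, ha, rfl⟩

lemma kerinvB (hB : ∃ g ∈ Γ, (g : Perm Δ) '' B = B) :
    ∀ g ∈ Γ ⊓ blockKer Γ B, ∀ a ∈ B, (g : Perm Δ) a ∈ B := by
  intro g hg a ha
  have h1 : (g : Perm Δ) '' B = B := hg.2 B hB
  rw [← h1]
  exact ⟨a, ha, rfl⟩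

/-- the restriction of the block kernel to the block `S` -/
def kerRestr (S : blockOrbit Γ B) : Subgroup (Perm ↥S.1) :=
  (inducedPermHom (Γ ⊓ blockKer Γ B) S.1 (kerinvS Γ B S)).range

/-- the restriction of the block kernel to `B` itself -/
def kerB (hB : ∃ g ∈ Γ, (g : Perm Δ) '' B = B) : Subgroup (Perm ↥B) :=
  (inducedPermHom (Γ ⊓ blockKer Γ B) B (kerinvB Γ B hB)).range

variable {Γ B}

lemma blockKer_conj {k g : Perm Δ} (hk : k ∈ blockKer Γ B) (hg : g ∈ Γ) :
    g * k * g⁻¹ ∈ blockKer Γ B := by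
  intro S hS
  obtain ⟨h, hh, hhS⟩ := hS
  have h1 : (g⁻¹ : Perm Δ) '' S = ((g⁻¹ * h : Perm Δ)) '' B := by
    rw [perm_image_mul, hhS]
  have h2 : k '' ((g⁻¹ : Perm Δ) '' S) = (g⁻¹ : Perm Δ) '' S := by
    rw [h1]
    exact hk _ ⟨g⁻¹ * h, Γ.mul_mem (Γ.inv_mem hg) hh, rfl⟩
  rw [perm_image_mul, perm_image_mul, h2]
  have := perm_image_inv_eq (σ := g⁻¹) (A := S) rfl
  simpa using this

lemma mem_sb_of_mem_ker (hB : ∃ g ∈ Γ, (g : Perm Δ) '' B = B) {k : Perm Δ}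
    (hk : k ∈ Γ ⊓ blockKer Γ B) : k ∈ Γ ⊓ permSetStab B :=
  ⟨hk.1, hk.2 B hB⟩

/-- `kerB` is contained in `bigX` and the corresponding primes are contained -/
lemma craset_kerB_le (hB : ∃ g ∈ Γ, (g : Perm Δ) '' B = B) :
    craset ↥(kerB Γ B hB) ⊆ craset ↥(bigX Γ B) := by
  apply craset_le_of_step
  · rintro σ ⟨k, rfl⟩
    exact ⟨⟨(k : Perm Δ), mem_sb_of_mem_ker hB k.2⟩, rfl⟩
  · rintro a ⟨k, rfl⟩ b ⟨h, rfl⟩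
    set π := inducedPermHom (Γ ⊓ permSetStab B) B (sbinv Γ B) with hπ
    set ρ := inducedPermHom (Γ ⊓ blockKer Γ B) B (kerinvB Γ B hB) with hρ
    have h1 : ρ k = π ⟨(k : Perm Δ), mem_sb_of_mem_ker hB k.2⟩ := rfl
    have hconj : ((h : Perm Δ) * (k : Perm Δ) * (h : Perm Δ)⁻¹) ∈ Γ ⊓ blockKer Γ B := by
      refine ⟨?_, blockKer_conj k.2.2 h.2.1⟩
      exact Γ.mul_mem (Γ.mul_mem h.2.1 k.2.1) (Γ.inv_mem h.2.1)
    refine ⟨⟨_, hconj⟩, ?_⟩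
    have h2 : ρ ⟨_, hconj⟩ =
        π (h * ⟨(k : Perm Δ), mem_sb_of_mem_ker hB k.2⟩ * h⁻¹) := rfl
    rw [h2, map_mul, map_mul, map_inv, ← h1]

end CoreLemmas

section ConjLemma
open Subgroup Equiv

variable {Δ : Type*} {Γ : Subgroup (Perm Δ)} {B : Set Δ}

/-- restriction of the kernel to any translate has the same primes as restriction to `B` -/
lemma craset_kerRestr (hB : ∃ g ∈ Γ, (g : Perm Δ) '' B = B) (S : blockOrbit Γ B) :
    craset ↥(kerRestr Γ B S) = craset ↥(kerB Γ B hB) := by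
  classical
  obtain ⟨g₀, hg₀, hg₀S⟩ := S.2
  -- the equivalence between B and S
  have hmem1 : ∀ b : ↥B, (g₀ : Perm Δ) b ∈ S.1 := by
    intro b; rw [← hg₀S]; exact ⟨b, b.2, rfl⟩
  have hmem2 : ∀ a : ↥S.1, (g₀⁻¹ : Perm Δ) a ∈ B := by
    intro a
    have h1 : (g₀⁻¹ : Perm Δ) '' S.1 = B := perm_image_inv_eq hg₀S
    have h2 : (g₀⁻¹ : Perm Δ) ↑a ∈ (g₀⁻¹ : Perm Δ) '' S.1 := ⟨a, a.2, rfl⟩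
    rwa [h1] at h2
  set e : ↥B ≃ ↥S.1 :=
    { toFun := fun b => ⟨g₀ b, hmem1 b⟩
      invFun := fun a => ⟨g₀⁻¹ a, hmem2 a⟩
      left_inv := fun b => by apply Subtype.ext; simp
      right_inv := fun a => by apply Subtype.ext; simp } with he
  set Φ := permCongrMul e with hΦ
  set ρB := inducedPermHom (Γ ⊓ blockKer Γ B) B (kerinvB Γ B hB) with hρB
  set ρS := inducedPermHom (Γ ⊓ blockKer Γ B) S.1 (kerinvS Γ B S) with hρS
  have hconjmem : ∀ k : ↥(Γ ⊓ blockKer Γ B), g₀ * (k : Perm Δ) * g₀⁻¹ ∈ Γ ⊓ blockKer Γ B :=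
    fun k => ⟨Γ.mul_mem (Γ.mul_mem hg₀ k.2.1) (Γ.inv_mem hg₀),
      blockKer_conj k.2.2 hg₀⟩
  have hconjmem' : ∀ k : ↥(Γ ⊓ blockKer Γ B), g₀⁻¹ * (k : Perm Δ) * g₀ ∈ Γ ⊓ blockKer Γ B := by
    intro k
    refine ⟨Γ.mul_mem (Γ.mul_mem (Γ.inv_mem hg₀) k.2.1) hg₀, ?_⟩
    have h2 := blockKer_conj k.2.2 (Γ.inv_mem hg₀)
    simpa using h2
  have hkey : ∀ k : ↥(Γ ⊓ blockKer Γ B),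
      Φ (ρB k) = ρS ⟨g₀ * (k : Perm Δ) * g₀⁻¹, hconjmem k⟩ := by
    intro k
    apply Equiv.ext
    rintro ⟨a, ha⟩
    apply Subtype.ext
    show (e ((ρB k) (e.symm ⟨a, ha⟩)) : Δ) = (g₀ * (k : Perm Δ) * g₀⁻¹) a
    simp only [he]
    show (g₀ : Perm Δ) ((k : Perm Δ) ((g₀⁻¹ : Perm Δ) a)) = (g₀ * (k : Perm Δ) * g₀⁻¹) a
    simp [Equiv.Perm.mul_apply]
  have hmap : Subgroup.map Φ.toMonoidHom (kerB Γ B hB) = kerRestr Γ B S := by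
    ext σ
    constructor
    · rintro ⟨τ, ⟨k, rfl⟩, rfl⟩
      exact ⟨⟨_, hconjmem k⟩, (hkey k).symm⟩
    · rintro ⟨k, rfl⟩
      refine ⟨ρB ⟨g₀⁻¹ * (k : Perm Δ) * g₀, hconjmem' k⟩, ⟨_, rfl⟩, ?_⟩
      show Φ (ρB ⟨g₀⁻¹ * (k : Perm Δ) * g₀, hconjmem' k⟩) = ρS k
      rw [hkey]
      congr 1
      apply Subtype.ext
      show g₀ * (g₀⁻¹ * (k : Perm Δ) * g₀) * g₀⁻¹ = (k : Perm Δ)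
      group
  calc craset ↥(kerRestr Γ B S) = craset ↥(Subgroup.map Φ.toMonoidHom (kerB Γ B hB)) := by
        rw [hmap]
    _ = craset ↥(kerB Γ B hB) :=
        (craset_congr (Subgroup.equivMapOfInjective _ Φ.toMonoidHom Φ.injective)).symm

end ConjLemma

section KernelChain
open Subgroup Equiv

variable {Δ : Type*} (Γ : Subgroup (Perm Δ)) (B : Set Δ)

/-- permutations fixing pointwise every translate outside `T` -/
def outsideFix (T : Finset (blockOrbit Γ B)) : Subgroup (Perm Δ) where
  carrier := {σ | ∀ S : blockOrbit Γ B, S ∉ T → ∀ a ∈ S.1, σ a = a}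
  one_mem' := by intro S _ a _; simp
  mul_mem' := by
    intro σ τ hσ hτ S hS a ha
    show σ (τ a) = a
    rw [hτ S hS a ha, hσ S hS a ha]
  inv_mem' := by
    intro σ hσ S hS a ha
    show σ⁻¹ a = a
    conv_lhs => rw [← hσ S hS a ha]
    simp

variable {Γ B}

lemma craset_blockKer_le [Finite Δ] (htrans : IsTransitivePermGroup Γ)
    (hblock : IsBlockOf Γ B) (hxB : ∃ x, x ∈ B) :
    craset ↥(Γ ⊓ blockKer Γ B) ⊆ craset ↥(bigX Γ B) := by
  classical
  letI : Fintype (blockOrbit Γ B) := Fintype.ofFinite _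
  have hB : ∃ g ∈ Γ, (g : Perm Δ) '' B = B := ⟨1, Γ.one_mem, by simp⟩
  set D : Finset (blockOrbit Γ B) → Subgroup (Perm Δ) :=
    fun T => (Γ ⊓ blockKer Γ B) ⊓ outsideFix Γ B T with hD
  have hDle : ∀ T, D T ≤ Γ ⊓ blockKer Γ B := fun T => inf_le_left
  have key : ∀ T : Finset (blockOrbit Γ B), craset ↥(D T) ⊆ craset ↥(bigX Γ B) := by
    intro T
    induction T using Finset.induction_on with
    | empty =>
        haveI hsub : Subsingleton ↥(D ∅) := by
          constructor
          rintro ⟨σ, hσ⟩ ⟨τ, hτ⟩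
          apply Subtype.ext
          apply Equiv.ext
          intro a
          obtain ⟨S, haS, -⟩ := exists_unique_block htrans hblock hxB a
          rw [hσ.2 S (Finset.notMem_empty S) a haS, hτ.2 S (Finset.notMem_empty S) a haS]
        rw [craset_of_subsingleton]
        exact Set.empty_subset _
    | @insert S T hST IH =>
        have hinvD : ∀ g ∈ D (insert S T), ∀ a ∈ S.1, (g : Perm Δ) a ∈ S.1 :=
          fun g hg => kerinvS Γ B S g hg.1
        set ρ := inducedPermHom (D (insert S T)) S.1 hinvD with hρ
        have hDT_le : D T ≤ D (insert S T) := by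
          apply inf_le_inf_left
          intro σ hσ S' hS' a ha
          exact hσ S' (fun hh => hS' (Finset.mem_insert_of_mem hh)) a ha
        have hker : ρ.ker = (D T).subgroupOf (D (insert S T)) := by
          ext g
          simp only [MonoidHom.mem_ker, Subgroup.mem_subgroupOf]
          constructor
          · intro h1
            refine ⟨g.2.1, ?_⟩
            intro S' hS' a ha
            by_cases hSS : S' = S
            · subst hSS
              have h2 := Equiv.ext_iff.1 h1 ⟨a, ha⟩
              exact congrArg Subtype.val h2
            · refine g.2.2 S' ?_ a ha
              simp only [Finset.mem_insert, not_or]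
              exact ⟨hSS, hS'⟩
          · intro h1
            apply Equiv.ext
            rintro ⟨a, ha⟩
            apply Subtype.ext
            exact h1.2 S hST a ha
        have hsplit := craset_split ρ.rangeRestrict ρ.rangeRestrict_surjective
        have hker2 : craset ↥(ρ.rangeRestrict.ker) = craset ↥(D T) := by
          rw [MonoidHom.ker_rangeRestrict, hker]
          exact craset_subgroupOf hDT_le
        have hrange : craset ↥ρ.range ⊆ craset ↥(kerRestr Γ B S) := by
          apply craset_le_of_step
          · rintro σ ⟨g, rfl⟩
            exact ⟨⟨(g : Perm Δ), g.2.1⟩, rfl⟩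
          · rintro a ⟨g, rfl⟩ b ⟨k, rfl⟩
            have hconj : (k : Perm Δ) * (g : Perm Δ) * (k : Perm Δ)⁻¹ ∈ D (insert S T) := by
              refine ⟨?_, ?_⟩
              · have h1 : (g : Perm Δ) ∈ Γ ⊓ blockKer Γ B := g.2.1
                have h2 : (k : Perm Δ) ∈ Γ ⊓ blockKer Γ B := k.2
                exact Subgroup.mul_mem _ (Subgroup.mul_mem _ h2 h1) (Subgroup.inv_mem _ h2)
              · intro S' hS' a ha
                set ki : Perm Δ := (k : Perm Δ)⁻¹ with hki
                have hkS' : (k : Perm Δ) '' S'.1 = S'.1 := k.2.2 S'.1 S'.2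
                have hkinv : ki a ∈ S'.1 := by
                  have h3 : ki '' S'.1 = S'.1 := perm_image_inv_eq hkS'
                  rw [← h3]; exact ⟨a, ha, rfl⟩
                show (k : Perm Δ) ((g : Perm Δ) (ki a)) = a
                rw [g.2.2 S' hS' _ hkinv, hki]
                simp
            refine ⟨⟨_, hconj⟩, ?_⟩
            set ρK := inducedPermHom (Γ ⊓ blockKer Γ B) S.1 (kerinvS Γ B S) with hρK
            have e1 : ρ g = ρK ⟨(g : Perm Δ), g.2.1⟩ := rfl
            have e2 : ρ ⟨_, hconj⟩ = ρK (k * ⟨(g : Perm Δ), g.2.1⟩ * k⁻¹) := rfl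
            rw [e2, map_mul, map_mul, map_inv, ← e1]
        refine hsplit.trans (Set.union_subset ?_ ?_)
        · exact le_of_eq hker2 |>.trans IH
        · refine hrange.trans ?_
          rw [craset_kerRestr hB S]
          exact craset_kerB_le hB
  have huniv : D Finset.univ = Γ ⊓ blockKer Γ B := by
    apply le_antisymm (hDle _)
    intro σ hσ
    refine ⟨hσ, ?_⟩
    intro S' hS'
    exact absurd (Finset.mem_univ S') hS'
  rw [← huniv]
  exact key Finset.univ

end KernelChain

section CoreThm
open Subgroup Equiv

theorem core_thm {Δ : Type*} [Fintype Δ] (Γ : Subgroup (Perm Δ))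
    (htrans : IsTransitivePermGroup Γ)
    {B : Set Δ} (hblock : IsBlockOf Γ B) (hns : ¬ B.Subsingleton) (hne : B ≠ Set.univ)
    {δ : Δ} (hδ : δ ∈ B) :
    ∃ (t m : ℕ) (X : Subgroup (Perm (Fin t))) (Y : Subgroup (Perm (Fin m)))
      (α : Fin t) (β : Fin m),
      2 ≤ t ∧ 2 ≤ m ∧ t * m = Fintype.card Δ ∧
      IsTransitivePermGroup X ∧ IsTransitivePermGroup Y ∧
      craset ↥(Γ ⊓ MulAction.stabilizer (Perm Δ) δ) ⊆
        craset ↥(X ⊓ MulAction.stabilizer (Perm (Fin t)) α) ∪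
          craset ↥(Y ⊓ MulAction.stabilizer (Perm (Fin m)) β) ∪ craset ↥X ∧
      craset ↥Γ ⊆ craset ↥X ∪ craset ↥Y ∧
      craset ↥(Y ⊓ MulAction.stabilizer (Perm (Fin m)) β) ⊆
        craset ↥(Γ ⊓ MulAction.stabilizer (Perm Δ) δ) ∪ craset ↥X ∧
      craset ↥(X ⊓ MulAction.stabilizer (Perm (Fin t)) α) ⊆
        craset ↥(Γ ⊓ MulAction.stabilizer (Perm Δ) δ) := by
  classical
  have hB : ∃ g ∈ Γ, (g : Perm Δ) '' B = B := ⟨1, Γ.one_mem, by simp⟩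
  have hxB : ∃ x, x ∈ B := ⟨δ, hδ⟩
  set SB := Γ ⊓ permSetStab B with hSB
  set PW := Γ ⊓ permPointStab B with hPW
  set KB := Γ ⊓ blockKer Γ B with hKB
  set Γδ := Γ ⊓ MulAction.stabilizer (Perm Δ) δ with hΓδ
  set π := inducedPermHom SB B (sbinv Γ B) with hπdef
  set X₀ := bigX Γ B with hX₀
  set ψ := blockHom Γ B with hψdef
  set Y₀ := ψ.range with hY₀
  set α₀ : ↥B := ⟨δ, hδ⟩ with hα₀
  set β₀ : blockOrbit Γ B := ⟨B, hB⟩ with hβ₀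
  -- basic inclusions
  have hΓδ_SB : Γδ ≤ SB := by
    rintro g ⟨hgΓ, hgδ⟩
    refine ⟨hgΓ, ?_⟩
    rcases hblock g hgΓ with h | h
    · exact h
    · exfalso
      have h1 : (g : Perm Δ) δ ∈ g '' B := ⟨δ, hδ, rfl⟩
      have h2 : g δ = δ := hgδ
      rw [h2] at h1
      exact Set.disjoint_left.1 h h1 hδ
  have hKB_SB : KB ≤ SB := fun k hk => ⟨hk.1, hk.2 B hB⟩
  have hPW_Γδ : PW ≤ Γδ := fun w hw => ⟨hw.1, show _ = _ from hw.2 δ hδ⟩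
  have hPW_norm : ∀ a ∈ PW, ∀ b ∈ SB, b * a * b⁻¹ ∈ PW := by
    rintro a ⟨haΓ, ha⟩ b ⟨hbΓ, hb⟩
    refine ⟨Γ.mul_mem (Γ.mul_mem hbΓ haΓ) (Γ.inv_mem hbΓ), ?_⟩
    intro x hx
    have hbinv : (b⁻¹ : Perm Δ) x ∈ B := by
      have h3 : (b⁻¹ : Perm Δ) '' B = B := perm_image_inv_eq hb
      rw [← h3]; exact ⟨x, hx, rfl⟩
    show b (a (b⁻¹ x)) = x
    rw [ha _ hbinv]; simp
  -- φ₁ : Γδ → X₀ ⊓ stab α₀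
  have hφ₁mem : ∀ g : ↥Γδ, π ⟨g.1, hΓδ_SB g.2⟩ ∈ X₀ ⊓ MulAction.stabilizer (Perm ↥B) α₀ := by
    intro g
    refine ⟨⟨_, rfl⟩, ?_⟩
    show π ⟨g.1, _⟩ α₀ = α₀
    apply Subtype.ext
    exact g.2.2
  set φ₁ : ↥Γδ →* ↥(X₀ ⊓ MulAction.stabilizer (Perm ↥B) α₀) :=
    MonoidHom.mk' (fun g => ⟨π ⟨g.1, hΓδ_SB g.2⟩, hφ₁mem g⟩) (by
      intro g h
      apply Subtype.ext
      show π ⟨(g * h : ↥Γδ).1, _⟩ = π ⟨g.1, _⟩ * π ⟨h.1, _⟩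
      rw [← map_mul]
      congr 1) with hφ₁def
  have hφ₁surj : Function.Surjective φ₁ := by
    rintro ⟨σ, hσX, hσδ⟩
    obtain ⟨g, rfl⟩ := hσX
    have hgδ : (g : Perm Δ) δ = δ := congrArg Subtype.val (hσδ : π g α₀ = α₀)
    refine ⟨⟨g.1, g.2.1, hgδ⟩, ?_⟩
    apply Subtype.ext
    show π ⟨g.1, _⟩ = π g
    congr 1
  have hφ₁ker : φ₁.ker = PW.subgroupOf Γδ := by
    ext g
    simp only [MonoidHom.mem_ker, Subgroup.mem_subgroupOf]
    constructor
    · intro h1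
      have h2 : π ⟨g.1, hΓδ_SB g.2⟩ = 1 := congrArg Subtype.val h1
      refine ⟨g.2.1, ?_⟩
      intro a ha
      exact congrArg Subtype.val (Equiv.ext_iff.1 h2 ⟨a, ha⟩)
    · intro h1
      apply Subtype.ext
      show π ⟨g.1, _⟩ = 1
      apply Equiv.ext
      rintro ⟨a, ha⟩
      apply Subtype.ext
      exact h1.2 a ha
  -- φ₂ : SB → Y₀ ⊓ stab β₀
  have hφ₂mem : ∀ g : ↥SB, ψ ⟨g.1, g.2.1⟩ ∈ Y₀ ⊓ MulAction.stabilizer (Perm (blockOrbit Γ B)) β₀ := by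
    intro g
    refine ⟨⟨_, rfl⟩, ?_⟩
    show ψ ⟨g.1, _⟩ β₀ = β₀
    apply Subtype.ext
    exact g.2.2
  set φ₂ : ↥SB →* ↥(Y₀ ⊓ MulAction.stabilizer (Perm (blockOrbit Γ B)) β₀) :=
    MonoidHom.mk' (fun g => ⟨ψ ⟨g.1, g.2.1⟩, hφ₂mem g⟩) (by
      intro g h
      apply Subtype.ext
      show ψ ⟨(g * h : ↥SB).1, _⟩ = ψ ⟨g.1, _⟩ * ψ ⟨h.1, _⟩
      rw [← map_mul]
      congr 1) with hφ₂def
  have hφ₂surj : Function.Surjective φ₂ := by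
    rintro ⟨τ, hτY, hτβ⟩
    obtain ⟨g, rfl⟩ := hτY
    have hgB : (g : Perm Δ) '' B = B := congrArg Subtype.val (hτβ : ψ g β₀ = β₀)
    refine ⟨⟨g.1, g.2, hgB⟩, ?_⟩
    apply Subtype.ext
    show ψ ⟨g.1, _⟩ = ψ g
    congr 1
  have hφ₂ker : φ₂.ker = KB.subgroupOf SB := by
    ext g
    simp only [MonoidHom.mem_ker, Subgroup.mem_subgroupOf]
    constructor
    · intro h1
      have h2 : ψ ⟨g.1, g.2.1⟩ = 1 := congrArg Subtype.val h1
      refine ⟨g.2.1, ?_⟩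
      intro S hS
      exact congrArg Subtype.val (Equiv.ext_iff.1 h2 ⟨S, hS⟩)
    · intro h1
      apply Subtype.ext
      show ψ ⟨g.1, _⟩ = 1
      apply Equiv.ext
      rintro ⟨S, hS⟩
      apply Subtype.ext
      exact h1.2 S hS
  -- φ₃ : Γ → Y₀,  φ₄ : SB → X₀
  have hφ₃ker : craset ↥(ψ.rangeRestrict.ker) = craset ↥KB := by
    have h1 : ψ.ker = KB.subgroupOf Γ := by
      ext g
      simp only [MonoidHom.mem_ker, Subgroup.mem_subgroupOf]
      constructor
      · intro h1
        refine ⟨g.2, ?_⟩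
        intro S hS
        exact congrArg Subtype.val (Equiv.ext_iff.1 h1 ⟨S, hS⟩)
      · intro h1
        apply Equiv.ext
        rintro ⟨S, hS⟩
        apply Subtype.ext
        exact h1.2 S hS
    rw [MonoidHom.ker_rangeRestrict, h1]
    exact craset_subgroupOf inf_le_left
  have hφ₄ker : craset ↥(π.rangeRestrict.ker) = craset ↥PW := by
    have h1 : π.ker = PW.subgroupOf SB := by
      ext g
      simp only [MonoidHom.mem_ker, Subgroup.mem_subgroupOf]
      constructor
      · intro h1
        refine ⟨g.2.1, ?_⟩
        intro a ha
        exact congrArg Subtype.val (Equiv.ext_iff.1 h1 ⟨a, ha⟩)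
      · intro h1
        apply Equiv.ext
        rintro ⟨a, ha⟩
        apply Subtype.ext
        exact h1.2 a ha
    rw [MonoidHom.ker_rangeRestrict, h1]
    exact craset_subgroupOf (hPW_Γδ.trans hΓδ_SB)
  -- inclusions of prime sets
  have I1 : craset ↥Γδ ⊆ craset ↥PW ∪ craset ↥(X₀ ⊓ MulAction.stabilizer (Perm ↥B) α₀) := by
    refine (craset_split φ₁ hφ₁surj).trans ?_
    apply Set.union_subset_union_left
    rw [hφ₁ker]
    exact le_of_eq (craset_subgroupOf hPW_Γδ)
  have I2 : craset ↥PW ⊆ craset ↥SB :=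
    craset_le_of_step (hPW_Γδ.trans hΓδ_SB) hPW_norm
  have I3 : craset ↥SB ⊆ craset ↥KB ∪
      craset ↥(Y₀ ⊓ MulAction.stabilizer (Perm (blockOrbit Γ B)) β₀) := by
    refine (craset_split φ₂ hφ₂surj).trans ?_
    apply Set.union_subset_union_left
    rw [hφ₂ker]
    exact le_of_eq (craset_subgroupOf hKB_SB)
  have I4 : craset ↥SB ⊆ craset ↥PW ∪ craset ↥X₀ := by
    refine (craset_split π.rangeRestrict π.rangeRestrict_surjective).trans ?_
    exact Set.union_subset_union_left _ (le_of_eq hφ₄ker)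
  have I5 : craset ↥Γ ⊆ craset ↥KB ∪ craset ↥Y₀ := by
    refine (craset_split ψ.rangeRestrict ψ.rangeRestrict_surjective).trans ?_
    exact Set.union_subset_union_left _ (le_of_eq hφ₃ker)
  have I6 : craset ↥PW ⊆ craset ↥Γδ :=
    craset_le_of_step hPW_Γδ (fun a ha b hb => hPW_norm a ha b (hΓδ_SB hb))
  have I7 : craset ↥(X₀ ⊓ MulAction.stabilizer (Perm ↥B) α₀) ⊆ craset ↥Γδ :=
    craset_le_of_surj φ₁ hφ₁surj
  have I8 : craset ↥(Y₀ ⊓ MulAction.stabilizer (Perm (blockOrbit Γ B)) β₀) ⊆ craset ↥SB :=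
    craset_le_of_surj φ₂ hφ₂surj
  have I9 : craset ↥KB ⊆ craset ↥X₀ := craset_blockKer_le htrans hblock hxB
  -- assembled inclusions
  have hPWl : craset ↥PW ⊆
      craset ↥(Y₀ ⊓ MulAction.stabilizer (Perm (blockOrbit Γ B)) β₀) ∪ craset ↥X₀ := by
    refine (I2.trans I3).trans ?_
    intro q hq
    rcases hq with h | h
    · exact Or.inr (I9 h)
    · exact Or.inl h
  have A1 : craset ↥Γδ ⊆
      craset ↥(X₀ ⊓ MulAction.stabilizer (Perm ↥B) α₀) ∪
        craset ↥(Y₀ ⊓ MulAction.stabilizer (Perm (blockOrbit Γ B)) β₀) ∪ craset ↥X₀ := by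
    refine I1.trans ?_
    intro q hq
    rcases hq with h | h
    · rcases hPWl h with h1 | h1
      · exact Or.inl (Or.inr h1)
      · exact Or.inr h1
    · exact Or.inl (Or.inl h)
  have A2 : craset ↥Γ ⊆ craset ↥X₀ ∪ craset ↥Y₀ := by
    refine I5.trans ?_
    intro q hq
    rcases hq with h | h
    · exact Or.inl (I9 h)
    · exact Or.inr h
  have A3 : craset ↥(Y₀ ⊓ MulAction.stabilizer (Perm (blockOrbit Γ B)) β₀) ⊆
      craset ↥Γδ ∪ craset ↥X₀ := by
    refine (I8.trans I4).trans ?_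
    intro q hq
    rcases hq with h | h
    · exact Or.inl (I6 h)
    · exact Or.inr h
  -- transitivity
  have hXtrans : IsTransitivePermGroup X₀ := by
    rintro ⟨a, ha⟩ ⟨b, hb⟩
    obtain ⟨g, hg, hab⟩ := htrans a b
    have hgSB : g ∈ SB := by
      refine ⟨hg, ?_⟩
      rcases hblock g hg with h | h
      · exact h
      · exact absurd hb (Set.disjoint_left.1 h ⟨a, ha, hab⟩)
    refine ⟨π ⟨g, hgSB⟩, ⟨_, rfl⟩, ?_⟩
    apply Subtype.ext
    exact hab
  have hYtrans : IsTransitivePermGroup Y₀ := by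
    rintro ⟨S, gS, hgS, hSdef⟩ ⟨S', gS', hgS', hS'def⟩
    refine ⟨ψ ⟨gS' * gS⁻¹, Γ.mul_mem hgS' (Γ.inv_mem hgS)⟩, ⟨_, rfl⟩, ?_⟩
    apply Subtype.ext
    show (gS' * gS⁻¹ : Perm Δ) '' S = S'
    rw [← hSdef, perm_image_mul]
    have h1 : (gS⁻¹ : Perm Δ) '' ((gS : Perm Δ) '' B) = B := perm_image_inv_eq rfl
    rw [h1, hS'def]
  -- cardinalities
  set t := Fintype.card ↥B with ht
  set m := Fintype.card (blockOrbit Γ B) with hm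
  have blkE := fun a => exists_unique_block htrans hblock hxB a
  set blk : Δ → blockOrbit Γ B := fun a => Classical.choose (blkE a) with hblk
  have hblk1 : ∀ a, a ∈ (blk a).1 := fun a => (Classical.choose_spec (blkE a)).1
  have hblk2 : ∀ (a) (S : blockOrbit Γ B), a ∈ S.1 → S = blk a :=
    fun a => (Classical.choose_spec (blkE a)).2
  have hcardS : ∀ S : blockOrbit Γ B, Fintype.card ↥S.1 = t := by
    intro S
    obtain ⟨g, hg, hgS⟩ := S.2
    have hmem1 : ∀ b : ↥B, (g : Perm Δ) b ∈ S.1 := by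
      intro b; rw [← hgS]; exact ⟨b, b.2, rfl⟩
    have hmem2 : ∀ a : ↥S.1, (g⁻¹ : Perm Δ) a ∈ B := by
      intro a
      have h1 : (g⁻¹ : Perm Δ) '' S.1 = B := perm_image_inv_eq hgS
      have h2 : (g⁻¹ : Perm Δ) ↑a ∈ (g⁻¹ : Perm Δ) '' S.1 := ⟨a, a.2, rfl⟩
      rwa [h1] at h2
    exact Fintype.card_congr
      { toFun := fun a => ⟨g⁻¹ a, hmem2 a⟩
        invFun := fun b => ⟨g b, hmem1 b⟩
        left_inv := fun a => by apply Subtype.ext; simp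
        right_inv := fun b => by apply Subtype.ext; simp }
  have htm : t * m = Fintype.card Δ := by
    have E : Δ ≃ Σ S : blockOrbit Γ B, ↥S.1 :=
      { toFun := fun a => ⟨blk a, ⟨a, hblk1 a⟩⟩
        invFun := fun p => p.2.1
        left_inv := fun a => rfl
        right_inv := fun p => by
          obtain ⟨S, a, haS⟩ := p
          have hS : S = blk a := hblk2 a S haS
          subst hS
          rfl }
    rw [Fintype.card_congr E, Fintype.card_sigma]
    rw [Finset.sum_congr rfl (fun S _ => hcardS S)]
    simp [mul_comm]
    exact Or.inl hm
  have ht2 : 2 ≤ t := by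
    rw [Set.not_subsingleton_iff] at hns
    haveI : Nontrivial ↥B := Set.nontrivial_coe_sort.2 hns
    exact Fintype.one_lt_card
  have hm2 : 2 ≤ m := by
    obtain ⟨a, haB⟩ := Set.ne_univ_iff_exists_notMem B |>.1 hne
    have hne2 : blk a ≠ β₀ := by
      intro h
      apply haB
      have := hblk1 a
      rw [h] at this
      exact this
    haveI : Nontrivial (blockOrbit Γ B) := ⟨blk a, β₀, hne2⟩
    exact Fintype.one_lt_card
  -- transport to Fin t and Fin m
  obtain ⟨X, hXt, hXcr, hXcrs⟩ := perm_transport (Fintype.equivFin ↥B) X₀ α₀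
  obtain ⟨Y, hYt, hYcr, hYcrs⟩ := perm_transport (Fintype.equivFin (blockOrbit Γ B)) Y₀ β₀
  refine ⟨t, m, X, Y, Fintype.equivFin ↥B α₀, Fintype.equivFin (blockOrbit Γ B) β₀,
    ht2, hm2, htm, hXt hXtrans, hYt hYtrans, ?_, ?_, ?_, ?_⟩
  · rw [hXcrs, hYcrs, hXcr]
    exact A1
  · rw [hXcr, hYcr]
    exact A2
  · rw [hYcrs, hXcr]
    exact A3
  · rw [hXcrs]
    exact I7

end CoreThm

section SimpleLemmas
open Subgroup

variable {G : Type*} [Group G]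

lemma crsn_of_simple (h : ∀ N : Subgroup G, N.Normal → N = ⊥ ∨ N = ⊤)
    {K : Subgroup G} (hK : CRSN K) : K = ⊥ ∨ K = ⊤ := by
  induction hK using Relation.ReflTransGen.head_induction_on with
  | refl => right; rfl
  | @head a c hac hcb ih =>
      rcases ih with rfl | rfl
      · left; exact le_bot_iff.1 hac.1
      · exact h a ⟨fun n hn g => hac.2 n hn g trivial⟩

lemma craset_empty_of_simple_nonabelian
    (hsimple : ∀ N : Subgroup G, N.Normal → N = ⊥ ∨ N = ⊤)
    (hna : ∃ a b : G, a * b ≠ b * a) : craset G = ∅ := by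
  ext q
  simp only [craset, Set.mem_setOf_eq, Set.mem_empty_iff_false, iff_false, not_and]
  intro hq hps
  haveI : Fact q.Prime := ⟨hq⟩
  obtain ⟨K, hSN, f, hf⟩ := hps
  rcases crsn_of_simple hsimple hSN with rfl | rfl
  · obtain ⟨c, hc⟩ := exists_ne (1 : Multiplicative (ZMod q))
    obtain ⟨x, hx⟩ := hf c
    have h1 : (x : G) = 1 := by
      have := x.2
      rwa [Subgroup.mem_bot] at this
    have hx1 : x = 1 := Subtype.ext h1
    rw [hx1, map_one] at hx
    exact hc hx.symm
  · set F : G →* Multiplicative (ZMod q) := f.comp (Subgroup.topEquiv (G := G)).symm.toMonoidHom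
      with hF
    have hFs : Function.Surjective F := hf.comp (Subgroup.topEquiv (G := G)).symm.surjective
    rcases hsimple F.ker inferInstance with hker | hker
    · have hinj : Function.Injective F := (MonoidHom.ker_eq_bot_iff F).1 hker
      obtain ⟨a, b, hab⟩ := hna
      apply hab
      apply hinj
      rw [map_mul, map_mul, mul_comm]
    · obtain ⟨c, hc⟩ := exists_ne (1 : Multiplicative (ZMod q))
      obtain ⟨x, hx⟩ := hFs c
      have h2 : F x = 1 := by
        have h3 : x ∈ F.ker := hker ▸ Subgroup.mem_top x
        exact h3
      rw [h2] at hx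
      exact hc hx.symm

end SimpleLemmas

section NormalTransitive
open Subgroup Equiv

lemma normal_transitive {Δ : Type*} {P : Subgroup (Perm Δ)}
    (htrans : IsTransitivePermGroup P)
    (hprim : ∀ B : Set Δ, IsBlockOf P B → B.Subsingleton ∨ B = Set.univ)
    {N : Subgroup ↥P} (hN : N.Normal) (hNbot : N ≠ ⊥) :
    IsTransitivePermGroup (N.map P.subtype) := by
  classical
  set Nm := N.map P.subtype with hNm
  set orb : Δ → Set Δ := fun a => {b | ∃ ν ∈ Nm, (ν : Perm Δ) a = b} with horb
  have horb_self : ∀ a, a ∈ orb a := fun a => ⟨1, Subgroup.one_mem _, rfl⟩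
  have horb_eq : ∀ a b, b ∈ orb a → orb a = orb b := by
    intro a b ⟨ν, hν, hνab⟩
    ext c
    constructor
    · rintro ⟨μ, hμ, hμac⟩
      exact ⟨μ * ν⁻¹, Subgroup.mul_mem _ hμ (Subgroup.inv_mem _ hν), by
        rw [← hνab]; simp [Equiv.Perm.mul_apply, hμac]⟩
    · rintro ⟨μ, hμ, hμbc⟩
      exact ⟨μ * ν, Subgroup.mul_mem _ hμ hν, by
        simp [Equiv.Perm.mul_apply, hνab, hμbc]⟩
  have hconj : ∀ g ∈ P, ∀ ν ∈ Nm, g * ν * g⁻¹ ∈ Nm := by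
    rintro g hg ν ⟨ν₀, hν₀, rfl⟩
    exact ⟨(⟨g, hg⟩ : ↥P) * ν₀ * (⟨g, hg⟩ : ↥P)⁻¹, hN.conj_mem ν₀ hν₀ _, rfl⟩
  have horb_img : ∀ g ∈ P, ∀ a, g '' orb a = orb (g a) := by
    intro g hg a
    ext c
    constructor
    · rintro ⟨b, ⟨ν, hν, hνab⟩, rfl⟩
      exact ⟨g * ν * g⁻¹, hconj g hg ν hν, by simp [Equiv.Perm.mul_apply, hνab]⟩
    · rintro ⟨ν, hν, hνc⟩
      refine ⟨(g⁻¹ * ν * g : Perm Δ) a, ⟨g⁻¹ * ν * g, ?_, rfl⟩, ?_⟩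
      · have := hconj g⁻¹ (P.inv_mem hg) ν hν
        simpa using this
      · rw [← hνc]
        simp [Equiv.Perm.mul_apply]
  have horb_block : ∀ a, IsBlockOf P (orb a) := by
    intro a g hg
    rw [horb_img g hg a]
    by_cases hmem : (g : Perm Δ) a ∈ orb a
    · left; exact (horb_eq a _ hmem).symm
    · right
      rw [Set.disjoint_left]
      intro c hc1 hc2
      apply hmem
      have h1 := horb_eq a c hc2
      have h2 := horb_eq (g a) c hc1
      rw [h1, ← h2]
      exact horb_self _
  -- some orbit is everything
  have hexuniv : ∃ a, orb a = Set.univ := by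
    by_contra hno
    push_neg at hno
    apply hNbot
    rw [eq_bot_iff]
    intro ν₀ hν₀
    have hfix : ∀ a, (ν₀ : Perm Δ) a = a := by
      intro a
      rcases hprim (orb a) (horb_block a) with h | h
      · exact (h ⟨↑ν₀, ⟨ν₀, hν₀, rfl⟩, rfl⟩ (horb_self a)).symm ▸ rfl
      · exact absurd h (hno a)
    have : (ν₀ : ↥P) = 1 := by
      apply Subtype.ext
      apply Equiv.ext
      intro a
      exact hfix a
    simp [this, Subgroup.mem_bot]
  obtain ⟨a, ha⟩ := hexuniv
  intro b c
  have hb : b ∈ orb a := ha ▸ Set.mem_univ b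
  have hc : c ∈ orb a := ha ▸ Set.mem_univ c
  obtain ⟨ν₁, hν₁, hν₁b⟩ := hb
  obtain ⟨ν₂, hν₂, hν₂c⟩ := hc
  refine ⟨ν₂ * ν₁⁻¹, Subgroup.mul_mem _ hν₂ (Subgroup.inv_mem _ hν₁), ?_⟩
  rw [← hν₁b]
  simp [Equiv.Perm.mul_apply, hν₂c]

end NormalTransitive

section BlockThrough
open Subgroup Equiv

lemma exists_block_through {Δ : Type*} {Γ : Subgroup (Perm Δ)} (htrans : IsTransitivePermGroup Γ)
    {B₀ : Set Δ} (hblock : IsBlockOf Γ B₀) (hns : ¬B₀.Subsingleton) (hne : B₀ ≠ Set.univ)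
    (x : Δ) : ∃ B : Set Δ, IsBlockOf Γ B ∧ ¬B.Subsingleton ∧ B ≠ Set.univ ∧ x ∈ B := by
  obtain ⟨b₀, hb₀⟩ := (Set.not_subsingleton_iff.1 hns).nonempty
  obtain ⟨g₀, hg₀, hg₀x⟩ := htrans b₀ x
  have himg : ∀ g : Perm Δ, (g : Perm Δ) '' (g₀ '' B₀) = g₀ '' ((g₀⁻¹ * g * g₀ : Perm Δ) '' B₀) := by
    intro g
    rw [← perm_image_mul, ← perm_image_mul,
      show g₀ * (g₀⁻¹ * g * g₀) = g * g₀ by group, perm_image_mul]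
  refine ⟨g₀ '' B₀, ?_, ?_, ?_, ⟨b₀, hb₀, hg₀x⟩⟩
  · intro g hg
    have hkey := hblock (g₀⁻¹ * g * g₀) (Γ.mul_mem (Γ.mul_mem (Γ.inv_mem hg₀) hg) hg₀)
    rcases hkey with h | h
    · left
      rw [himg g, h]
    · right
      rw [himg g]
      exact (Set.disjoint_image_iff g₀.injective).2 h
  · rw [Set.not_subsingleton_iff] at hns ⊢
    exact hns.image g₀.injective
  · intro h
    apply hne
    have h1 := congrArg (fun A => (g₀⁻¹ : Perm Δ) '' A) h
    rw [perm_image_inv_eq (σ := g₀) (A := B₀) rfl] at h1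
    rw [h1, Set.image_univ_of_surjective g₀⁻¹.surjective]

end BlockThrough

section TransBound
open Subgroup Equiv

theorem trans_bound : ∀ (s cX : ℕ) {Δ : Type} [inst : Fintype Δ], Fintype.card Δ = s →
    ∀ (P : Subgroup (Perm Δ)), Nat.card ↥P = cX → IsTransitivePermGroup P → ∀ δ : Δ,
    2 ^ ((craset ↥P \ craset ↥(P ⊓ MulAction.stabilizer (Perm Δ) δ)).ncard) ≤ s := by
  intro s
  induction s using Nat.strong_induction_on with
  | _ s ihs =>
  intro cX
  induction cX using Nat.strong_induction_on with
  | _ cX ihc =>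
  intro Δ _ hs P hcX htrans δ
  classical
  have hs1 : 1 ≤ s := hs ▸ Fintype.card_pos_iff.2 ⟨δ⟩
  set Pδ := P ⊓ MulAction.stabilizer (Perm Δ) δ with hPδdef
  by_cases hprim : ∀ B : Set Δ, IsBlockOf P B → B.Subsingleton ∨ B = Set.univ
  · -- primitive (or degenerate) case
    by_cases hNex : ∃ N : Subgroup ↥P, N.Normal ∧ N ≠ ⊥ ∧ N ≠ ⊤
    · obtain ⟨N, hN, hNbot, hNtop⟩ := hNex
      set Nm := N.map P.subtype with hNm
      have hNmP : Nm ≤ P := Subgroup.map_subtype_le N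
      have hNmtrans : IsTransitivePermGroup Nm := normal_transitive htrans hprim hN hNbot
      have hsurj2 : Function.Surjective
          ((QuotientGroup.mk' N).comp (Subgroup.inclusion (inf_le_left : Pδ ≤ P))) := by
        intro qc
        obtain ⟨g, rfl⟩ := QuotientGroup.mk'_surjective N qc
        obtain ⟨ν, hν, hνδ⟩ := hNmtrans δ ((g : Perm Δ) δ)
        obtain ⟨ν₀, hν₀, rfl⟩ := hν
        have hz : ((ν₀⁻¹ * g : ↥P) : Perm Δ) ∈ Pδ := by
          refine ⟨(ν₀⁻¹ * g : ↥P).2, ?_⟩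
          show ((ν₀⁻¹ * g : ↥P) : Perm Δ) δ = δ
          show ((ν₀ : Perm Δ)⁻¹ * (g : Perm Δ)) δ = δ
          rw [Equiv.Perm.mul_apply, ← hνδ]
          simp
        refine ⟨⟨(ν₀⁻¹ * g : ↥P), hz⟩, ?_⟩
        show (QuotientGroup.mk' N) (ν₀⁻¹ * g) = QuotientGroup.mk' N g
        rw [map_mul, map_inv]
        have h2 : (QuotientGroup.mk' N) ν₀ = 1 := by
          rw [← MonoidHom.mem_ker, QuotientGroup.ker_mk']
          exact hν₀
        rw [h2]
        simp
      have hquot : craset (↥P ⧸ N) ⊆ craset ↥Pδ := craset_le_of_surj _ hsurj2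
      have hsplitP : craset ↥P ⊆ craset ↥N ∪ craset (↥P ⧸ N) := by
        have h3 := craset_split (QuotientGroup.mk' N) (QuotientGroup.mk'_surjective N)
        rwa [QuotientGroup.ker_mk'] at h3
      have hNNm : craset ↥N = craset ↥Nm :=
        craset_congr (Subgroup.equivMapOfInjective N P.subtype P.subtype_injective)
      have hstabincl : craset ↥(Nm ⊓ MulAction.stabilizer (Perm Δ) δ) ⊆ craset ↥Pδ := by
        apply craset_le_of_step (inf_le_inf_right _ hNmP)
        rintro a ⟨haN, haδ⟩ b ⟨hbP, hbδ⟩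
        obtain ⟨a₀, ha₀, rfl⟩ := haN
        refine ⟨⟨(⟨b, hbP⟩ : ↥P) * a₀ * (⟨b, hbP⟩ : ↥P)⁻¹, hN.conj_mem a₀ ha₀ _, rfl⟩, ?_⟩
        have hbδ' : b δ = δ := hbδ
        have haδ' : (a₀ : Perm Δ) δ = δ := haδ
        have hbinv : b⁻¹ δ = δ := by
          conv_lhs => rw [← hbδ']
          simp
        show (b * (a₀ : Perm Δ) * b⁻¹) δ = δ
        rw [Equiv.Perm.mul_apply, Equiv.Perm.mul_apply, hbinv, haδ', hbδ']
      have hNmlt : Nat.card ↥Nm < cX := by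
        rw [← hcX]
        apply card_lt_of_lt
        rcases lt_or_eq_of_le hNmP with h | h
        · exact h
        · exfalso
          apply hNtop
          rw [eq_top_iff]
          intro g _
          have hmem : (g : Perm Δ) ∈ Nm := by rw [h]; exact g.2
          obtain ⟨ν₀, hν₀, hv⟩ := hmem
          have hv2 : ν₀ = g := Subtype.ext hv
          rwa [← hv2]
      have hrec := ihc (Nat.card ↥Nm) hNmlt hs Nm rfl hNmtrans δ
      have hsub : craset ↥P \ craset ↥Pδ ⊆
          craset ↥Nm \ craset ↥(Nm ⊓ MulAction.stabilizer (Perm Δ) δ) := by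
        rintro q ⟨hq1, hq2⟩
        rcases hsplitP hq1 with h | h
        · exact ⟨hNNm ▸ h, fun hmem => hq2 (hstabincl hmem)⟩
        · exact absurd (hquot h) hq2
      calc 2 ^ (craset ↥P \ craset ↥Pδ).ncard
          ≤ 2 ^ (craset ↥Nm \ craset ↥(Nm ⊓ MulAction.stabilizer (Perm Δ) δ)).ncard := by
            apply Nat.pow_le_pow_right (by norm_num)
            exact Set.ncard_le_ncard hsub (Set.Finite.subset craset_finite Set.diff_subset)
        _ ≤ s := hrec
    · -- no nontrivial proper normal subgroup : P is simple (or trivial)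
      have hsimple : ∀ N : Subgroup ↥P, N.Normal → N = ⊥ ∨ N = ⊤ := by
        intro N hn
        by_contra hcon
        push_neg at hcon
        exact hNex ⟨N, hn, hcon.1, hcon.2⟩
      by_cases hs2 : 2 ≤ s
      · haveI hPnt : Nontrivial ↥P := by
          have hΔnt : Nontrivial Δ := Fintype.one_lt_card_iff_nontrivial.1 (hs ▸ hs2)
          obtain ⟨a, b, hab⟩ := hΔnt
          obtain ⟨g, hg, hgab⟩ := htrans a b
          refine ⟨⟨g, hg⟩, 1, ?_⟩
          intro h
          apply hab
          have h1 : g = 1 := congrArg Subtype.val h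
          rw [← hgab, h1]
          simp
        by_cases hcomm : ∀ a b : ↥P, a * b = b * a
        · letI : CommGroup ↥P := { (inferInstance : Group ↥P) with mul_comm := hcomm }
          haveI : IsSimpleGroup ↥P := ⟨hsimple⟩
          have hcardP : (Nat.card ↥P).Prime := IsSimpleGroup.prime_card
          have hsub : craset ↥P ⊆ {Nat.card ↥P} := by
            rintro q ⟨hq, hps⟩
            have hdvd := crps_dvd hps hq
            exact (Nat.prime_dvd_prime_iff_eq hq hcardP).1 hdvd
          have h1 : (craset ↥P \ craset ↥Pδ).ncard ≤ 1 := by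
            calc (craset ↥P \ craset ↥Pδ).ncard
                ≤ ({Nat.card ↥P} : Set ℕ).ncard :=
                  Set.ncard_le_ncard (Set.diff_subset.trans hsub) (Set.finite_singleton _)
              _ = 1 := Set.ncard_singleton _
          calc 2 ^ (craset ↥P \ craset ↥Pδ).ncard ≤ 2 ^ 1 :=
                Nat.pow_le_pow_right (by norm_num) h1
            _ ≤ s := hs2
        · push_neg at hcomm
          obtain ⟨a, b, hab⟩ := hcomm
          have hempty : craset ↥P = ∅ := craset_empty_of_simple_nonabelian hsimple ⟨a, b, hab⟩
          rw [hempty, Set.empty_diff, Set.ncard_empty]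
          simpa using hs1
      · have hΔsub : Subsingleton Δ := by
          have hcard1 : Fintype.card Δ ≤ 1 := by omega
          exact Fintype.card_le_one_iff_subsingleton.1 hcard1
        haveI : Subsingleton (Perm Δ) := ⟨fun σ τ => Equiv.ext fun a => Subsingleton.elim _ _⟩
        haveI : Subsingleton ↥P := ⟨fun a b => Subtype.ext (Subsingleton.elim _ _)⟩
        rw [craset_of_subsingleton, Set.empty_diff, Set.ncard_empty]
        simpa using hs1
  · -- imprimitive case
    push_neg at hprim
    obtain ⟨B₀, hblock₀, hB₀⟩ := hprim
    obtain ⟨B, hblock, hnsB, hneB, hδB⟩ :=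
      exists_block_through htrans hblock₀ (Set.not_subsingleton_iff.2 hB₀.1) hB₀.2 δ
    obtain ⟨t, m, X, Y, α, β, ht2, hm2, htm, hXtr, hYtr, A1, A2, A3, A4⟩ :=
      core_thm P htrans hblock hnsB hneB hδB
    have htms : t * m = s := by rw [htm, hs]
    have htlt : t < s := by
      have h1 : t * 2 ≤ t * m := Nat.mul_le_mul_left t hm2
      omega
    have hmlt : m < s := by
      have h1 : m * 2 ≤ m * t := Nat.mul_le_mul_left m ht2
      have h2 : m * t = s := by rw [mul_comm]; exact htms
      omega
    have hEX := ihs t htlt (Nat.card ↥X) (by simp) X rfl hXtr α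
    have hEY := ihs m hmlt (Nat.card ↥Y) (by simp) Y rfl hYtr β
    set EX := craset ↥X \ craset ↥(X ⊓ MulAction.stabilizer (Perm (Fin t)) α) with hEXdef
    set EY := craset ↥Y \ craset ↥(Y ⊓ MulAction.stabilizer (Perm (Fin m)) β) with hEYdef
    have hsub : craset ↥P \ craset ↥Pδ ⊆ EX ∪ EY := by
      rintro q ⟨hq1, hq2⟩
      have hqX : q ∈ craset ↥X → q ∈ EX ∪ EY := by
        intro hX
        by_cases hXα : q ∈ craset ↥(X ⊓ MulAction.stabilizer (Perm (Fin t)) α)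
        · exact absurd (A4 hXα) hq2
        · exact Or.inl ⟨hX, hXα⟩
      rcases A2 hq1 with h | h
      · exact hqX h
      · by_cases hYβ : q ∈ craset ↥(Y ⊓ MulAction.stabilizer (Perm (Fin m)) β)
        · rcases A3 hYβ with h1 | h1
          · exact absurd h1 hq2
          · exact hqX h1
        · exact Or.inr ⟨h, hYβ⟩
    have hfinEX : EX.Finite := Set.Finite.subset craset_finite Set.diff_subset
    have hfinEY : EY.Finite := Set.Finite.subset craset_finite Set.diff_subset
    have hcount : (craset ↥P \ craset ↥Pδ).ncard ≤ EX.ncard + EY.ncard := by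
      calc (craset ↥P \ craset ↥Pδ).ncard ≤ (EX ∪ EY).ncard :=
            Set.ncard_le_ncard hsub (hfinEX.union hfinEY)
        _ ≤ EX.ncard + EY.ncard := Set.ncard_union_le _ _
    calc 2 ^ (craset ↥P \ craset ↥Pδ).ncard ≤ 2 ^ (EX.ncard + EY.ncard) :=
          Nat.pow_le_pow_right (by norm_num) hcount
      _ = 2 ^ EX.ncard * 2 ^ EY.ncard := pow_add 2 _ _
      _ ≤ t * m := Nat.mul_le_mul hEX hEY
      _ = s := htms

end TransBound


/-- Reduction for transitive groups. Let `G` be a transitive but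
imprimitive permutation group on a finite set `Ω` with `|Ω| = n` and `G_x` a point
stabiliser. Then there are transitive groups `X`, `Y` of degrees `t, m ≥ 2` with `t·m ≤ n`,
with point stabilisers `X_α`, `Y_β`, such that
`|Comp_A(G_x)| ≤ |Comp_A(X_α)| + |Comp_A(Y_β)| + log₂ n`. -/
theorem reduction_transitive {Ω : Type} [Fintype Ω] (G : Subgroup (Equiv.Perm Ω))
    (htrans : IsTransitivePermGroup G) (hnprim : ¬ IsPrimitivePermGroup G) (x : Ω) :
    ∃ (t m : ℕ) (X : Subgroup (Equiv.Perm (Fin t))) (Y : Subgroup (Equiv.Perm (Fin m)))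
      (α : Fin t) (β : Fin m),
      2 ≤ t ∧ 2 ≤ m ∧ t * m ≤ Fintype.card Ω ∧
      IsTransitivePermGroup X ∧ IsTransitivePermGroup Y ∧
      (abelianCompFactorCount ↥(G ⊓ MulAction.stabilizer (Equiv.Perm Ω) x) : ℝ) ≤
        (abelianCompFactorCount ↥(X ⊓ MulAction.stabilizer (Equiv.Perm (Fin t)) α) : ℝ) +
        (abelianCompFactorCount ↥(Y ⊓ MulAction.stabilizer (Equiv.Perm (Fin m)) β) : ℝ) +
        Real.logb 2 (Fintype.card Ω) := by
  classical
  have hex : ∃ B₀ : Set Ω, IsBlockOf G B₀ ∧ ¬B₀.Subsingleton ∧ B₀ ≠ Set.univ := by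
    by_contra h
    push_neg at h
    refine hnprim ⟨htrans, fun B hB => ?_⟩
    by_cases h1 : B.Subsingleton
    · exact Or.inl h1
    · exact Or.inr (h B hB (Set.not_subsingleton_iff.1 h1))
  obtain ⟨B₀, hblock₀, hns₀, hne₀⟩ := hex
  obtain ⟨B, hblock, hnsB, hneB, hxB⟩ := exists_block_through htrans hblock₀ hns₀ hne₀ x
  obtain ⟨t, m, X, Y, α, β, ht2, hm2, htm, hXtr, hYtr, A1, A2, A3, A4⟩ :=
    core_thm G htrans hblock hnsB hneB hxB
  set EX := craset ↥X \ craset ↥(X ⊓ MulAction.stabilizer (Equiv.Perm (Fin t)) α) with hEX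
  have hEXbound : 2 ^ EX.ncard ≤ t :=
    trans_bound t (Nat.card ↥X) (by simp) X rfl hXtr α
  refine ⟨t, m, X, Y, α, β, ht2, hm2, le_of_eq htm, hXtr, hYtr, ?_⟩
  -- counting
  set Gx := G ⊓ MulAction.stabilizer (Equiv.Perm Ω) x with hGx
  set Xα := X ⊓ MulAction.stabilizer (Equiv.Perm (Fin t)) α with hXα
  set Yβ := Y ⊓ MulAction.stabilizer (Equiv.Perm (Fin m)) β with hYβ
  have hsub : craset ↥Gx ⊆ (craset ↥Xα ∪ craset ↥Yβ) ∪ EX := by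
    intro q hq
    rcases A1 hq with (h | h) | h
    · exact Or.inl (Or.inl h)
    · exact Or.inl (Or.inr h)
    · by_cases hXa : q ∈ craset ↥Xα
      · exact Or.inl (Or.inl hXa)
      · exact Or.inr ⟨h, hXa⟩
  have hfinXα : (craset ↥Xα).Finite := craset_finite
  have hfinYβ : (craset ↥Yβ).Finite := craset_finite
  have hfinEX : EX.Finite := Set.Finite.subset craset_finite Set.diff_subset
  have hcount : (craset ↥Gx).ncard ≤
      (craset ↥Xα).ncard + (craset ↥Yβ).ncard + EX.ncard := by
    calc (craset ↥Gx).ncard ≤ ((craset ↥Xα ∪ craset ↥Yβ) ∪ EX).ncard :=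
          Set.ncard_le_ncard hsub ((hfinXα.union hfinYβ).union hfinEX)
      _ ≤ (craset ↥Xα ∪ craset ↥Yβ).ncard + EX.ncard := Set.ncard_union_le _ _
      _ ≤ (craset ↥Xα).ncard + (craset ↥Yβ).ncard + EX.ncard := by
          have := Set.ncard_union_le (craset ↥Xα) (craset ↥Yβ)
          omega
  -- translate to the composition-factor counts
  rw [abelianCompFactorCount_eq, abelianCompFactorCount_eq, abelianCompFactorCount_eq]
  -- bound EX.ncard by logb
  have hn4 : 4 ≤ Fintype.card Ω := by
    rw [← htm]
    calc 4 = 2 * 2 := by norm_num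
      _ ≤ t * m := Nat.mul_le_mul ht2 hm2
  have htn : t ≤ Fintype.card Ω := by
    rw [← htm]
    calc t = t * 1 := (mul_one t).symm
      _ ≤ t * m := Nat.mul_le_mul_left t (by omega)
  have hEXreal : (EX.ncard : ℝ) ≤ Real.logb 2 (Fintype.card Ω) := by
    have h1 : (2 : ℝ) ^ EX.ncard ≤ (Fintype.card Ω : ℝ) := by
      have h2 : ((2 ^ EX.ncard : ℕ) : ℝ) ≤ ((Fintype.card Ω : ℕ) : ℝ) := by
        exact_mod_cast hEXbound.trans htn
      push_cast at h2
      exact h2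
    have h3 : Real.logb 2 ((2 : ℝ) ^ EX.ncard) ≤ Real.logb 2 (Fintype.card Ω) := by
      apply (Real.logb_le_logb (by norm_num) (by positivity) (by
        have : (0:ℝ) < 4 := by norm_num
        calc (0:ℝ) < 4 := this
          _ ≤ (Fintype.card Ω : ℝ) := by exact_mod_cast hn4)).2 h1
    rwa [Real.logb_pow, Real.logb_self_eq_one (by norm_num : (1:ℝ) < 2), mul_one] at h3
  have hcast : ((craset ↥Gx).ncard : ℝ) ≤
      ((craset ↥Xα).ncard : ℝ) + ((craset ↥Yβ).ncard : ℝ) + (EX.ncard : ℝ) := by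
    exact_mod_cast hcount
  calc ((craset ↥Gx).ncard : ℝ)
      ≤ ((craset ↥Xα).ncard : ℝ) + ((craset ↥Yβ).ncard : ℝ) + (EX.ncard : ℝ) := hcast
    _ ≤ ((craset ↥Xα).ncard : ℝ) + ((craset ↥Yβ).ncard : ℝ) +
        Real.logb 2 (Fintype.card Ω) := by linarith
end

section
/- There is an absolute constant c > 0 such that for every sufficiently large k, the alternating group Alt(k) contains a cyclic subgroup whose order is the product of at least c·√(k/log₂ k) distinct primes. -/
open Equiv

section AuxLemmas

open Finset


lemma aux_pow (j : ℕ) (hj : 11 ≤ j) : 32 * j + 39 ≤ 2 ^ j := by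
  induction j with
  | zero => omega
  | succ m ih =>
    rcases Nat.lt_or_ge m 11 with h | h
    · interval_cases m <;> simp_all
    · have := ih (by omega)
      have : 2 ^ (m + 1) = 2 * 2 ^ m := by ring
      omega

set_option maxHeartbeats 1000000 in
lemma primes_finset (k : ℕ) (hk : 2 ^ 22 ≤ k) :
    ∃ P : Finset ℕ, (∀ p ∈ P, p.Prime ∧ 2 < p) ∧ (∑ p ∈ P, p) ≤ k ∧
      (1 / 64 : ℝ) * Real.sqrt ((k : ℝ) / Real.logb 2 (k : ℝ)) ≤ (P.card : ℝ) := by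
  have hk0 : k ≠ 0 := by positivity
  set Lk := Nat.log 2 k with hLk
  set t := Nat.sqrt (k * Lk) with ht
  set n := t / 8 with hn
  set s := n / (Lk + 1) with hs
  have hLk22 : 22 ≤ Lk := by
    rw [hLk, Nat.le_log_iff_pow_le one_lt_two hk0]; exact hk
  -- t is big
  have hsqk_le_t : Nat.sqrt k ≤ t := Nat.sqrt_le_sqrt (Nat.le_mul_of_pos_right k (by omega))
  have h2_11 : 2 ^ 11 ≤ Nat.sqrt k := Nat.le_sqrt.2 (by norm_num; omega)
  have hn4 : 4 ≤ n := by
    have : 2 ^ 11 ≤ t := le_trans h2_11 hsqk_le_t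
    omega
  -- C3 : 2 * (Lk + 1) ≤ n
  have hC3 : 2 * (Lk + 1) ≤ n := by
    have hj : 11 ≤ Lk / 2 := by omega
    have hpow : 2 ^ (Lk / 2) ≤ Nat.sqrt k := by
      rw [Nat.le_sqrt, ← pow_add]
      exact le_trans (Nat.pow_le_pow_right (by norm_num) (by omega))
        (Nat.pow_log_le_self 2 hk0)
    have haux := aux_pow (Lk / 2) hj
    have h16 : 16 * Lk + 23 ≤ t := by
      have h1 : 16 * Lk + 23 ≤ 32 * (Lk / 2) + 39 := by omega
      omega
    omega
  have hs1 : 1 ≤ s := by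
    rw [hs, Nat.one_le_div_iff (by omega)]
    omega
  -- 2 * n ≤ k
  have h2nk : 2 * n ≤ k := by
    have h1 : t ≤ k := by
      calc t ≤ Nat.sqrt (k * k) :=
            Nat.sqrt_le_sqrt (Nat.mul_le_mul_left k (Nat.log_le_self 2 k))
        _ = k := Nat.sqrt_eq k
    omega
  -- the prime counting bound
  set r := (Nat.centralBinom n).primeFactors.card with hr
  have hcb1 : 4 ^ n < n * Nat.centralBinom n := Nat.four_pow_lt_mul_centralBinom n hn4
  have hcb2 : Nat.centralBinom n ≤ (2 * n) ^ r := by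
    conv_lhs => rw [← Nat.factorization_prod_pow_eq_self (Nat.centralBinom_ne_zero n)]
    rw [Finsupp.prod]
    calc ∏ p ∈ (Nat.centralBinom n).factorization.support,
          p ^ (Nat.centralBinom n).factorization p
        ≤ ∏ _p ∈ (Nat.centralBinom n).factorization.support, (2 * n) := by
          refine Finset.prod_le_prod' fun p _ => ?_
          exact Nat.pow_factorization_choose_le (by omega)
      _ = (2 * n) ^ r := by
          rw [Finset.prod_const, Nat.support_factorization]
  have hkey : 2 * n ≤ (r + 1) * (Lk + 1) := by
    have h1 : 2 ^ (2 * n) < (2 * n) ^ (r + 1) := by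
      calc 2 ^ (2 * n) = 4 ^ n := by rw [pow_mul]; norm_num
        _ < n * Nat.centralBinom n := hcb1
        _ ≤ (2 * n) * (2 * n) ^ r := Nat.mul_le_mul (by omega) hcb2
        _ = (2 * n) ^ (r + 1) := by ring
    have h2 : (2 * n) ^ (r + 1) ≤ (2 ^ (Nat.log 2 (2 * n) + 1)) ^ (r + 1) :=
      Nat.pow_le_pow_left (le_of_lt (Nat.lt_pow_succ_log_self one_lt_two (2 * n))) _
    rw [← pow_mul] at h2
    have h3 : 2 * n < (Nat.log 2 (2 * n) + 1) * (r + 1) :=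
      (Nat.pow_lt_pow_iff_right one_lt_two).1 (lt_of_lt_of_le h1 h2)
    have h4 : Nat.log 2 (2 * n) ≤ Lk := Nat.log_mono_right h2nk
    calc 2 * n ≤ (Nat.log 2 (2 * n) + 1) * (r + 1) := le_of_lt h3
      _ ≤ (Lk + 1) * (r + 1) := Nat.mul_le_mul_right _ (by omega)
      _ = (r + 1) * (Lk + 1) := by ring
  have hdivmul : s * (Lk + 1) ≤ n := Nat.div_mul_le_self n (Lk + 1)
  have hsr : s + 2 ≤ r + 1 := by
    have h1 : (s + 2) * (Lk + 1) ≤ (r + 1) * (Lk + 1) := by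
      calc (s + 2) * (Lk + 1) = s * (Lk + 1) + 2 * (Lk + 1) := by ring
        _ ≤ n + n := by omega
        _ ≤ (r + 1) * (Lk + 1) := by omega
    exact Nat.le_of_mul_le_mul_right h1 (by omega)
  -- choose the subset
  set P₀ := (Nat.centralBinom n).primeFactors.erase 2 with hP₀
  have hscard : s ≤ P₀.card := by
    have h2 := Finset.pred_card_le_card_erase (s := (Nat.centralBinom n).primeFactors) (a := 2)
    rw [← hP₀, ← hr] at h2
    omega
  obtain ⟨P, hPsub, hPcard⟩ := Finset.exists_subset_card_eq hscard
  have hPprime : ∀ p ∈ P, p.Prime ∧ 2 < p := by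
    intro p hp
    have hp₀ := hPsub hp
    have h1 : p.Prime := Nat.prime_of_mem_primeFactors (Finset.mem_of_mem_erase hp₀)
    have h2 : p ≠ 2 := Finset.ne_of_mem_erase hp₀
    exact ⟨h1, by have := h1.two_le; omega⟩
  have hple : ∀ p ∈ P, p ≤ 2 * n := by
    intro p hp
    have h1 : p ∣ Nat.centralBinom n :=
      Nat.dvd_of_mem_primeFactors (Finset.mem_of_mem_erase (hPsub hp))
    have h2 : Nat.centralBinom n ∣ Nat.factorial (2 * n) := by
      rw [Nat.centralBinom_eq_two_mul_choose]
      exact ⟨Nat.factorial n * Nat.factorial (2 * n - n), by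
        rw [← mul_assoc, Nat.choose_mul_factorial_mul_factorial (by omega : n ≤ 2 * n)]⟩
    exact ((hPprime p hp).1.dvd_factorial).1 (h1.trans h2)
  have hsum : (∑ p ∈ P, p) ≤ k := by
    have h1 : (∑ p ∈ P, p) ≤ s * (2 * n) := by
      simpa [hPcard, smul_eq_mul] using Finset.sum_le_card_nsmul P id (2 * n) hple
    have h2 : s * (2 * n) * (Lk + 1) ≤ k * (Lk + 1) := by
      have h64 : 64 * (n * n) ≤ k * Lk := by
        have h8 : 8 * n ≤ t := by omega
        have ht2 : t * t ≤ k * Lk := by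
          have h := Nat.sqrt_le' (k * Lk); rw [pow_two] at h; exact h
        calc 64 * (n * n) = (8 * n) * (8 * n) := by ring
          _ ≤ t * t := Nat.mul_le_mul h8 h8
          _ ≤ k * Lk := ht2
      calc s * (2 * n) * (Lk + 1) = (s * (Lk + 1)) * (2 * n) := by ring
        _ ≤ n * (2 * n) := Nat.mul_le_mul_right _ hdivmul
        _ = 2 * (n * n) := by ring
        _ ≤ k * Lk := by omega
        _ ≤ k * (Lk + 1) := Nat.mul_le_mul_left k (by omega)
    have h3 : s * (2 * n) ≤ k := Nat.le_of_mul_le_mul_right h2 (by omega)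
    omega
  refine ⟨P, hPprime, hsum, ?_⟩
  -- real estimate
  rw [hPcard]
  have hkR : (2 : ℝ) ^ 22 ≤ (k : ℝ) := by exact_mod_cast hk
  set X := (k : ℝ) with hX
  set B := Real.logb 2 (k : ℝ) with hB
  have hLB : (Lk : ℝ) ≤ B := by rw [hB, hLk]; exact Real.natLog_le_logb k 2
  have hXpos : (0 : ℝ) < X := by positivity
  have hBL : B ≤ (Lk : ℝ) + 1 := by
    rw [hB, Real.logb_le_iff_le_rpow one_lt_two (by positivity)]
    have h1 : (k : ℝ) ≤ (2 : ℝ) ^ (Lk + 1 : ℕ) := by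
      exact_mod_cast (Nat.lt_pow_succ_log_self one_lt_two k).le
    rw [show ((Lk : ℝ) + 1) = ((Lk + 1 : ℕ) : ℝ) by push_cast; ring, Real.rpow_natCast]
    exact h1
  have hL22 : (22 : ℝ) ≤ (Lk : ℝ) := by exact_mod_cast hLk22
  have hB4 : (4 : ℝ) ≤ B := by linarith
  have hXL : X * (Lk : ℝ) ≤ ((t : ℝ) + 1) ^ 2 := by
    have h0 : k * Lk ≤ (t + 1) ^ 2 := by
      have h := Nat.lt_succ_sqrt' (k * Lk)
      rw [← ht, Nat.succ_eq_add_one] at h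
      exact h.le
    have hcast : (k : ℝ) * (Lk : ℝ) ≤ ((t : ℝ) + 1) ^ 2 := by exact_mod_cast h0
    exact hcast
  have hT : (t : ℝ) ≤ 8 * (n : ℝ) + 7 := by
    have : t < 8 * (t / 8 + 1) := by omega
    exact_mod_cast (by omega : t ≤ 8 * n + 7)
  have hN : (n : ℝ) + 1 ≤ ((s : ℝ) + 1) * ((Lk : ℝ) + 1) := by
    have h1 : (Lk + 1) * s + n % (Lk + 1) = n := by rw [hs]; exact Nat.div_add_mod n (Lk + 1)
    have h2 : n % (Lk + 1) < Lk + 1 := Nat.mod_lt n (by omega)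
    have h3 : n + 1 ≤ (s + 1) * (Lk + 1) := by
      have : (s + 1) * (Lk + 1) = (Lk + 1) * s + (Lk + 1) := by ring
      omega
    exact_mod_cast h3
  have hsR : (1 : ℝ) ≤ (s : ℝ) := by exact_mod_cast hs1
  set u := Real.sqrt (X / B) with hu
  have hu0 : 0 ≤ u := Real.sqrt_nonneg _
  have hBpos : (0 : ℝ) < B := by linarith
  have huB : u ^ 2 * B = X := by
    rw [hu, Real.sq_sqrt (by positivity)]
    field_simp
  -- assemble
  have hSnn : (0 : ℝ) ≤ (s : ℝ) := by positivity
  have hSL : (s : ℝ) * (Lk : ℝ) ≤ (s : ℝ) * B := mul_le_mul_of_nonneg_left hLB hSnn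
  have hSB1 : (s : ℝ) * 4 ≤ (s : ℝ) * B := mul_le_mul_of_nonneg_left hB4 hSnn
  have hSB2 : 1 * B ≤ (s : ℝ) * B := mul_le_mul_of_nonneg_right hsR (by linarith)
  have step1 : (t : ℝ) + 1 ≤ 8 * (((s : ℝ) + 1) * ((Lk : ℝ) + 1)) := by linarith
  have step2 : X * (Lk : ℝ) ≤ 64 * (((s : ℝ) + 1) * ((Lk : ℝ) + 1)) ^ 2 := by
    calc X * (Lk : ℝ) ≤ ((t : ℝ) + 1) ^ 2 := hXL
      _ ≤ (8 * (((s : ℝ) + 1) * ((Lk : ℝ) + 1))) ^ 2 := by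
          apply pow_le_pow_left₀ (by positivity) step1
      _ = 64 * (((s : ℝ) + 1) * ((Lk : ℝ) + 1)) ^ 2 := by ring
  have hfact : ((s : ℝ) + 1) * ((Lk : ℝ) + 1) ≤ (5 / 2) * ((s : ℝ) * B) := by nlinarith
  have hfact2 : (((s : ℝ) + 1) * ((Lk : ℝ) + 1)) ^ 2 ≤ ((5 / 2) * ((s : ℝ) * B)) ^ 2 :=
    pow_le_pow_left₀ (by positivity) hfact 2
  have step3 : X * (Lk : ℝ) ≤ 400 * ((s : ℝ) * B) ^ 2 := by linarith [step2, hfact2]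
  have hXlinear : X * B ≤ X * (Lk : ℝ) + X := by
    have h := mul_le_mul_of_nonneg_left hBL hXpos.le
    linarith [h]
  have hXsmall : 22 * X ≤ X * (Lk : ℝ) := by
    have h := mul_le_mul_of_nonneg_left hL22 hXpos.le
    linarith [h]
  have step4 : X * B ≤ 420 * ((s : ℝ) * B) ^ 2 := by linarith
  have step5 : u ^ 2 ≤ 420 * (s : ℝ) ^ 2 := by
    have hq : u ^ 2 * B ^ 2 ≤ (420 * (s : ℝ) ^ 2) * B ^ 2 := by
      calc u ^ 2 * B ^ 2 = (u ^ 2 * B) * B := by ring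
        _ = X * B := by rw [huB]
        _ ≤ 420 * ((s : ℝ) * B) ^ 2 := step4
        _ = (420 * (s : ℝ) ^ 2) * B ^ 2 := by ring
    exact le_of_mul_le_mul_right hq (by positivity)
  have step6 : u ≤ 64 * (s : ℝ) := by
    have h1 : u ^ 2 ≤ (64 * (s : ℝ)) ^ 2 := by
      have := sq_nonneg (s : ℝ)
      calc u ^ 2 ≤ 420 * (s : ℝ) ^ 2 := step5
        _ ≤ (64 * (s : ℝ)) ^ 2 := by ring_nf; nlinarith [sq_nonneg (s : ℝ)]
    calc u = Real.sqrt (u ^ 2) := (Real.sqrt_sq hu0).symm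
      _ ≤ Real.sqrt ((64 * (s : ℝ)) ^ 2) := Real.sqrt_le_sqrt h1
      _ = 64 * (s : ℝ) := Real.sqrt_sq (by positivity)
  linarith

lemma perm_of_sum_le (P : Finset ℕ) (hP : ∀ p ∈ P, p.Prime) :
    ∀ k : ℕ, (∑ p ∈ P, p) ≤ k → ∃ g : Equiv.Perm (Fin k), orderOf g = ∏ p ∈ P, p := by
  classical
  induction P using Finset.induction_on with
  | empty => intro k _; exact ⟨1, by simp⟩
  | @insert q P hqP ih =>
    intro k hk
    have hq : q.Prime := hP q (mem_insert_self q P)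
    have hP' : ∀ p ∈ P, p.Prime := fun p hp => hP p (mem_insert_of_mem hp)
    obtain ⟨g', hg'⟩ := ih hP' (∑ p ∈ P, p) le_rfl
    -- a q-cycle on Fin q
    have h2q : 2 ≤ q := hq.two_le
    have hrot : orderOf (finRotate q) = q := by
      rw [(isCycle_finRotate_of_le h2q).orderOf,
        support_finRotate_of_le h2q, Finset.card_univ, Fintype.card_fin]
    -- combine on a sum type
    set h : Equiv.Perm (Fin q ⊕ Fin (∑ p ∈ P, p)) :=
      Equiv.Perm.sumCongrHom _ _ (finRotate q, g') with hh
    have hordh : orderOf h = Nat.lcm q (∏ p ∈ P, p) := by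
      rw [hh, orderOf_injective _ Equiv.Perm.sumCongrHom_injective, Prod.orderOf_mk, hrot, hg']
    have hcop : Nat.Coprime q (∏ p ∈ P, p) := by
      refine Nat.Coprime.prod_right fun p hp => ?_
      exact (Nat.coprime_primes hq (hP' p hp)).2 (by rintro rfl; exact hqP hp)
    have hlcm : Nat.lcm q (∏ p ∈ P, p) = q * ∏ p ∈ P, p := hcop.lcm_eq_mul
    -- embed into Fin k
    have hcard : Fintype.card (Fin q ⊕ Fin (∑ p ∈ P, p)) ≤ Fintype.card (Fin k) := by
      simpa using (by simpa [Finset.sum_insert hqP] using hk :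
        q + ∑ p ∈ P, p ≤ k)
    obtain ⟨e⟩ := Function.Embedding.nonempty_of_card_le hcard
    refine ⟨Equiv.Perm.viaEmbeddingHom e h, ?_⟩
    rw [orderOf_injective _ (Equiv.Perm.viaEmbeddingHom_injective e), hordh, hlcm,
      Finset.prod_insert hqP]

lemma alt_subgroup_of_primes (P : Finset ℕ) (hP : ∀ p ∈ P, p.Prime ∧ 2 < p) (k : ℕ)
    (hk : (∑ p ∈ P, p) ≤ k) :
    ∃ H : Subgroup ↥(alternatingGroup (Fin k)), IsCyclic ↥H ∧
      Nat.card ↥H = ∏ p ∈ P, p := by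
  classical
  obtain ⟨g, hg⟩ := perm_of_sum_le P (fun p hp => (hP p hp).1) k hk
  have hodd : ¬ 2 ∣ ∏ p ∈ P, p := by
    intro h
    obtain ⟨p, hp, hdvd⟩ := (Nat.Prime.prime Nat.prime_two).exists_mem_finset_dvd h
    have := (Nat.prime_dvd_prime_iff_eq Nat.prime_two (hP p hp).1).1 hdvd
    have h2 := (hP p hp).2
    omega
  have hord2 : orderOf (g ^ 2) = ∏ p ∈ P, p := by
    rw [orderOf_pow, hg, Nat.Coprime.gcd_eq_one, Nat.div_one]
    exact Nat.Coprime.symm ((Nat.prime_two.coprime_iff_not_dvd).2 hodd)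
  have hmem : g ^ 2 ∈ alternatingGroup (Fin k) := by
    rw [Equiv.Perm.mem_alternatingGroup, map_pow, Int.units_sq]
  set a : ↥(alternatingGroup (Fin k)) := ⟨g ^ 2, hmem⟩ with ha
  have horda : orderOf a = ∏ p ∈ P, p := by
    rw [← hord2]
    exact (orderOf_injective (alternatingGroup (Fin k)).subtype (Subgroup.subtype_injective _) a).symm
  refine ⟨Subgroup.zpowers a, ?_, by rw [Nat.card_zpowers, horda]⟩
  exact ⟨⟨⟨a, Subgroup.mem_zpowers a⟩, fun x => by
    obtain ⟨n, hn⟩ := x.2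
    exact ⟨n, Subtype.ext (by simpa using hn)⟩⟩⟩

lemma squarefree_prod_primes : ∀ P : Finset ℕ, (∀ p ∈ P, p.Prime) → Squarefree (∏ p ∈ P, p) := by
  intro P
  induction P using Finset.induction_on with
  | empty => intro _; simpa using squarefree_one
  | @insert q P hqP ih =>
    intro hP
    have hq : q.Prime := hP q (Finset.mem_insert_self q P)
    have hP' : ∀ p ∈ P, p.Prime := fun p hp => hP p (Finset.mem_insert_of_mem hp)
    have hcop : Nat.Coprime q (∏ p ∈ P, p) := by
      refine Nat.Coprime.prod_right fun p hp => ?_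
      exact (Nat.coprime_primes hq (hP' p hp)).2 (by rintro rfl; exact hqP hp)
    rw [Finset.prod_insert hqP]
    exact (Nat.squarefree_mul hcop).2 ⟨hq.squarefree, ih hP'⟩


end AuxLemmas

/-- There is an absolute constant `c > 0` such that for every sufficiently
large `k`, the alternating group `Alt(k)` contains a cyclic subgroup whose order is a
product of at least `c·√(k / log₂ k)` distinct primes. -/
theorem alternating_contains_cyclic_many_primes :
    ∃ c : ℝ, 0 < c ∧ ∃ k₀ : ℕ, ∀ k : ℕ, k₀ ≤ k →
      ∃ H : Subgroup ↥(alternatingGroup (Fin k)), IsCyclic ↥H ∧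
        Squarefree (Nat.card ↥H) ∧
        c * Real.sqrt ((k : ℝ) / Real.logb 2 (k : ℝ)) ≤
          ((Nat.card ↥H).primeFactors.card : ℝ) := by
  refine ⟨1 / 64, by norm_num, 2 ^ 22, fun k hk => ?_⟩
  obtain ⟨P, hP, hsum, hbound⟩ := primes_finset k hk
  obtain ⟨H, hcyc, hcard⟩ := alt_subgroup_of_primes P hP k hsum
  refine ⟨H, hcyc, ?_, ?_⟩
  · rw [hcard]
    exact squarefree_prod_primes P (fun p hp => (hP p hp).1)
  · rw [hcard, Nat.primeFactors_prod (fun p hp => (hP p hp).1)]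
    exact hbound
end
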